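/- arXiv:2003.07776 — 4 statements merged into one kernel-verified Lean document; each statement's English description precedes it below -/
import Mathlib

section
/- Let Γ_k denote a Gamma-distributed random variable with shape k ∈ ℕ and rate 1. For all integers k ≥ 1 and all R > 0: (i) if k ≥ R then e^{−R} R^k/k! ≤ P(Γ_k ≤ R) ≤ e^{k−R}(R/k)^k ≤ 3√k · e^{−R} R^k/k!; (ii) if 1 ≤ k ≤ R then e^{−R} R^{k−1}/(k−1)! ≤ P(Γ_k > R) ≤ e^{k−R}(R/k)^k ≤ 3√k · e^{−R} R^k/k!. -/
open MeasureTheory Filter Set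

noncomputable section

/-- The distribution function of a Gamma random variable with shape `k ≥ 1` and rate `1`:
`P(Γ_k ≤ R) = (1/(k−1)!)∫_0^R x^{k−1} e^{−x} dx`. -/
def gammaCdf (k : ℕ) (R : ℝ) : ℝ :=
  (1 / (Nat.factorial (k - 1) : ℝ)) * ∫ x in Set.Ioc (0:ℝ) R, x ^ (k - 1) * Real.exp (-x)

lemma sumExp_hasDerivAt (k : ℕ) (x : ℝ) :
    HasDerivAt (fun y : ℝ => ∑ i ∈ Finset.range (k+1), y ^ i / i.factorial)
      (∑ i ∈ Finset.range k, x ^ i / i.factorial) x := by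
  induction k with
  | zero => simpa using hasDerivAt_const x (1:ℝ)
  | succ k ih =>
    have h2 : HasDerivAt (fun y : ℝ => y ^ (k+1) / ((k+1).factorial : ℝ))
        (x ^ k / (k.factorial : ℝ)) x := by
      have h := (hasDerivAt_pow (k+1) x).div_const (((k+1).factorial : ℕ) : ℝ)
      refine h.congr_deriv ?_
      rw [Nat.factorial_succ]
      have hf : (0:ℝ) < k.factorial := by positivity
      push_cast
      field_simp
    have h3 := ih.fun_add h2
    simpa [Finset.sum_range_succ] using h3

lemma gammaCdf_eq (k : ℕ) (hk : 1 ≤ k) (R : ℝ) (hR : 0 ≤ R) :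
    gammaCdf k R = 1 - Real.exp (-R) * ∑ i ∈ Finset.range k, R ^ i / (i.factorial : ℝ) := by
  obtain ⟨m, rfl⟩ : ∃ m, k = m + 1 := ⟨k - 1, by omega⟩
  set F : ℝ → ℝ := fun y => -(Real.exp (-y) * ∑ i ∈ Finset.range (m+1), y ^ i / i.factorial)
    with hFdef
  have hF : ∀ y : ℝ, HasDerivAt F (y ^ m * Real.exp (-y) / m.factorial) y := by
    intro y
    have he : HasDerivAt (fun y : ℝ => Real.exp (-y)) (-Real.exp (-y)) y := by
      exact ((Real.hasDerivAt_exp (-y)).comp y (hasDerivAt_neg y)).congr_deriv (by ring)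
    have h := (he.mul (sumExp_hasDerivAt m y)).neg
    refine h.congr_deriv ?_
    rw [Finset.sum_range_succ]
    ring
  have hcont : Continuous fun x : ℝ => x ^ m * Real.exp (-x) / (m.factorial : ℝ) := by
    fun_prop
  have key : ∫ x in (0:ℝ)..R, x ^ m * Real.exp (-x) / (m.factorial : ℝ) = F R - F 0 :=
    intervalIntegral.integral_eq_sub_of_hasDerivAt (fun y _ => hF y)
      (hcont.intervalIntegrable _ _)
  have h0 : F 0 = -1 := by
    simp [hFdef, Finset.sum_range_succ']
  rw [intervalIntegral.integral_of_le hR] at key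
  have hm : m + 1 - 1 = m := rfl
  rw [gammaCdf, hm]
  have hfac : ((m.factorial : ℕ) : ℝ) ≠ 0 := by positivity
  have : ∫ x in Set.Ioc (0:ℝ) R, x ^ m * Real.exp (-x) / (m.factorial : ℝ)
      = (∫ x in Set.Ioc (0:ℝ) R, x ^ m * Real.exp (-x)) / (m.factorial : ℝ) :=
    integral_div _ _
  rw [this, h0] at key
  rw [hFdef] at key
  field_simp at key ⊢
  linarith [key]

lemma pow_mul_pow_le {a b : ℝ} (ha : 0 ≤ a) (hab : a ≤ b) (i m : ℕ) :
    b ^ i * a ^ (i + m) ≤ b ^ (i + m) * a ^ i := by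
  have hb : 0 ≤ b := ha.trans hab
  rw [pow_add, pow_add]
  calc b^i * (a^i * a^m) = (b^i * a^i) * a^m := by ring
    _ ≤ (b^i * a^i) * b^m :=
        mul_le_mul_of_nonneg_left (pow_le_pow_left₀ ha hab m) (by positivity)
    _ = b^i * b^m * a^i := by ring

lemma factorial_le_stirling (k : ℕ) (hk : 1 ≤ k) :
    (k.factorial : ℝ) ≤ 3 * Real.sqrt k * ((k : ℝ) / Real.exp 1) ^ k := by
  obtain ⟨m, rfl⟩ : ∃ m, k = m + 1 := ⟨k - 1, by omega⟩
  have h := Stirling.stirlingSeq'_antitone (Nat.zero_le m)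
  simp only [Function.comp] at h
  rw [Stirling.stirlingSeq_one, Stirling.stirlingSeq] at h
  set P : ℝ := (((m+1:ℕ):ℝ) / Real.exp 1) ^ (m+1) with hP
  have hPpos : 0 < P := by positivity
  have hd : (0:ℝ) < Real.sqrt (2 * ((m+1:ℕ):ℝ)) * P := by positivity
  rw [div_le_div_iff₀ hd (by positivity)] at h
  have hsqrt : Real.sqrt (2 * ((m+1:ℕ):ℝ)) = Real.sqrt 2 * Real.sqrt ((m+1:ℕ):ℝ) :=
    Real.sqrt_mul (by norm_num) _
  have hs2 : (0:ℝ) < Real.sqrt 2 := by positivity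
  calc ((m+1).factorial : ℝ) = ((m+1).factorial : ℝ) * Real.sqrt 2 / Real.sqrt 2 := by
        field_simp
    _ ≤ (Real.exp 1 * (Real.sqrt (2 * ((m+1:ℕ):ℝ)) * P)) / Real.sqrt 2 := by gcongr
    _ = Real.exp 1 * Real.sqrt ((m+1:ℕ):ℝ) * P := by rw [hsqrt]; field_simp
    _ ≤ 3 * Real.sqrt ((m+1:ℕ):ℝ) * P := by
        gcongr
        exact Real.exp_one_lt_d9.le.trans (by norm_num)

set_option maxHeartbeats 1000000 in
/-- Tail bounds for Gamma random variables with integer shape `k` and rate `1`: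
(i) if `k ≥ R` then `e^{−R}R^k/k! ≤ P(Γ_k ≤ R) ≤ e^{k−R}(R/k)^k ≤ 3√k·e^{−R}R^k/k!`;
(ii) if `1 ≤ k ≤ R` then `e^{−R}R^{k−1}/(k−1)! ≤ P(Γ_k > R) ≤ e^{k−R}(R/k)^k
    ≤ 3√k·e^{−R}R^k/k!`. -/
theorem gamma_tail_bounds (k : ℕ) (hk : 1 ≤ k) (R : ℝ) (hR : 0 < R) :
    ((R ≤ (k : ℝ)) →
      Real.exp (-R) * R ^ k / (Nat.factorial k : ℝ) ≤ gammaCdf k R ∧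
      gammaCdf k R ≤ Real.exp ((k : ℝ) - R) * (R / k) ^ k ∧
      Real.exp ((k : ℝ) - R) * (R / k) ^ k
        ≤ 3 * Real.sqrt k * (Real.exp (-R) * R ^ k / (Nat.factorial k : ℝ))) ∧
    (((k : ℝ) ≤ R) →
      Real.exp (-R) * R ^ (k - 1) / (Nat.factorial (k - 1) : ℝ) ≤ 1 - gammaCdf k R ∧
      1 - gammaCdf k R ≤ Real.exp ((k : ℝ) - R) * (R / k) ^ k ∧
      Real.exp ((k : ℝ) - R) * (R / k) ^ k
        ≤ 3 * Real.sqrt k * (Real.exp (-R) * R ^ k / (Nat.factorial k : ℝ))) := by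
  have hk0 : (0:ℝ) < (k:ℝ) := by exact_mod_cast hk
  set S := ∑ i ∈ Finset.range k, R ^ i / (i.factorial : ℝ) with hS
  have hcdf : gammaCdf k R = 1 - Real.exp (-R) * S := gammaCdf_eq k hk R hR.le
  have hepos : (0:ℝ) < Real.exp (-R) := Real.exp_pos _
  have hfac : (0:ℝ) < (k.factorial : ℝ) := by positivity
  -- third inequality (common, unconditional)
  have hthird : Real.exp ((k:ℝ) - R) * (R / k) ^ k
      ≤ 3 * Real.sqrt k * (Real.exp (-R) * R ^ k / (k.factorial : ℝ)) := by
    have hst := factorial_le_stirling k hk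
    have h1 : Real.exp k * (R / (k:ℝ)) ^ k * (k.factorial : ℝ)
        ≤ 3 * Real.sqrt k * R ^ k := by
      calc Real.exp (k:ℝ) * (R/(k:ℝ))^k * (k.factorial : ℝ)
          ≤ Real.exp (k:ℝ) * (R/(k:ℝ))^k * (3 * Real.sqrt k * ((k:ℝ)/Real.exp 1)^k) :=
            mul_le_mul_of_nonneg_left hst (by positivity)
        _ = 3 * Real.sqrt k * (Real.exp (k:ℝ) * ((R/(k:ℝ)) * ((k:ℝ)/Real.exp 1))^k) := by
            rw [mul_pow]; ring
        _ = 3 * Real.sqrt k * R ^ k := by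
            rw [div_mul_div_comm, mul_comm R (k:ℝ), mul_div_mul_left _ _ (ne_of_gt hk0),
              div_pow, ← Real.exp_nat_mul, mul_one, mul_div_cancel₀ _ (Real.exp_ne_zero _)]
    have h2 : Real.exp (k:ℝ) * (R/(k:ℝ))^k ≤ 3 * Real.sqrt k * R^k / (k.factorial : ℝ) :=
      (le_div_iff₀ hfac).2 h1
    calc Real.exp ((k:ℝ)-R) * (R/(k:ℝ))^k
        = Real.exp (-R) * (Real.exp (k:ℝ) * (R/(k:ℝ))^k) := by
          rw [sub_eq_add_neg, Real.exp_add]; ring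
      _ ≤ Real.exp (-R) * (3 * Real.sqrt k * R^k / (k.factorial : ℝ)) :=
          mul_le_mul_of_nonneg_left h2 hepos.le
      _ = 3 * Real.sqrt k * (Real.exp (-R) * R^k / (k.factorial : ℝ)) := by ring
  constructor
  · -- part (i): R ≤ k
    intro hRk
    refine ⟨?_, ?_, hthird⟩
    · -- lower bound
      have h1 : S + R^k/(k.factorial:ℝ) ≤ Real.exp R := by
        rw [hS, ← Finset.sum_range_succ]
        exact Real.sum_le_exp_of_nonneg hR.le (k+1)
      have h2 := mul_le_mul_of_nonneg_left h1 hepos.le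
      rw [← Real.exp_add, neg_add_cancel, Real.exp_zero] at h2
      have h3 : Real.exp (-R) * (S + R^k/(k.factorial:ℝ))
          = Real.exp (-R) * S + Real.exp (-R) * R^k / (k.factorial:ℝ) := by ring
      rw [hcdf]; linarith
    · -- upper bound via Poisson tail
      have hsum := Real.summable_pow_div_factorial R
      have hsplit := Summable.sum_add_tsum_nat_add (f := fun n => R^n/(n.factorial:ℝ)) k hsum
      have hexpR : (∑' n : ℕ, R^n/(n.factorial:ℝ)) = Real.exp R := by
        rw [Real.exp_eq_exp_ℝ, NormedSpace.exp_eq_tsum_div]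
      have hsumk := Real.summable_pow_div_factorial ((k:ℝ))
      have hTle : (∑' i : ℕ, R^(i+k)/(((i+k).factorial:ℕ):ℝ))
          ≤ (R/(k:ℝ))^k * Real.exp (k:ℝ) := by
        have hsum2 : Summable (fun i : ℕ => ((k:ℝ))^(i+k)/(((i+k).factorial:ℕ):ℝ)) :=
          (summable_nat_add_iff k).2 hsumk
        have hle1 : (∑' i : ℕ, R^(i+k)/(((i+k).factorial:ℕ):ℝ))
            ≤ ∑' i : ℕ, (R/(k:ℝ))^k * (((k:ℝ))^(i+k)/(((i+k).factorial:ℕ):ℝ)) := by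
          refine Summable.tsum_le_tsum ?_ ((summable_nat_add_iff k).2 hsum) (hsum2.mul_left _)
          intro i
          have h1 : R ^ (i+k) ≤ (R/(k:ℝ))^k * (k:ℝ)^(i+k) := by
            rw [div_pow, div_mul_eq_mul_div, le_div_iff₀ (by positivity)]
            calc R^(i+k) * (k:ℝ)^k = (k:ℝ)^k * R^(k+i) := by rw [add_comm i k]; ring
              _ ≤ (k:ℝ)^(k+i) * R^k := pow_mul_pow_le hR.le hRk k i
              _ = R^k * (k:ℝ)^(i+k) := by rw [add_comm i k]; ring
          calc R^(i+k)/(((i+k).factorial:ℕ):ℝ)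
              ≤ ((R/(k:ℝ))^k * (k:ℝ)^(i+k))/(((i+k).factorial:ℕ):ℝ) := by gcongr
            _ = (R/(k:ℝ))^k * (((k:ℝ))^(i+k)/(((i+k).factorial:ℕ):ℝ)) := by ring
        have hle2 : (∑' i : ℕ, ((k:ℝ))^(i+k)/(((i+k).factorial:ℕ):ℝ)) ≤ Real.exp (k:ℝ) := by
          have hsplit2 := Summable.sum_add_tsum_nat_add (f := fun n => ((k:ℝ))^n/((n.factorial:ℕ):ℝ)) k hsumk
          have hhead : (0:ℝ) ≤ ∑ i ∈ Finset.range k, ((k:ℝ))^i/((i.factorial:ℕ):ℝ) := by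
            positivity
          have hexpk : (∑' n : ℕ, ((k:ℝ))^n/((n.factorial:ℕ):ℝ)) = Real.exp (k:ℝ) := by
            rw [Real.exp_eq_exp_ℝ, NormedSpace.exp_eq_tsum_div]
          linarith
        calc (∑' i : ℕ, R^(i+k)/(((i+k).factorial:ℕ):ℝ))
            ≤ ∑' i : ℕ, (R/(k:ℝ))^k * (((k:ℝ))^(i+k)/(((i+k).factorial:ℕ):ℝ)) := hle1
          _ = (R/(k:ℝ))^k * ∑' i : ℕ, ((k:ℝ))^(i+k)/(((i+k).factorial:ℕ):ℝ) := tsum_mul_left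
          _ ≤ (R/(k:ℝ))^k * Real.exp (k:ℝ) :=
              mul_le_mul_of_nonneg_left hle2 (by positivity)
      have h : Real.exp R ≤ S + (R/(k:ℝ))^k * Real.exp (k:ℝ) := by
        rw [hexpR] at hsplit
        rw [hS]
        linarith
      have h4 := mul_le_mul_of_nonneg_left h hepos.le
      rw [← Real.exp_add, neg_add_cancel, Real.exp_zero] at h4
      have h6 : Real.exp (-R) * (S + (R/(k:ℝ))^k * Real.exp (k:ℝ))
          = Real.exp (-R) * S + Real.exp (-R) * ((R/(k:ℝ))^k * Real.exp (k:ℝ)) := by ring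
      have h7 : Real.exp ((k:ℝ) - R) * (R/(k:ℝ))^k
          = Real.exp (-R) * ((R/(k:ℝ))^k * Real.exp (k:ℝ)) := by
        rw [sub_eq_add_neg, Real.exp_add]; ring
      rw [hcdf, h7]; linarith
  · -- part (ii): k ≤ R
    intro hkR
    have hmem : k - 1 ∈ Finset.range k := Finset.mem_range.2 (by omega)
    have hcdf2 : 1 - gammaCdf k R = Real.exp (-R) * S := by rw [hcdf]; ring
    refine ⟨?_, ?_, hthird⟩
    · rw [hcdf2]
      have h1 : R^(k-1)/(((k-1).factorial:ℕ):ℝ) ≤ S := by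
        rw [hS]
        exact Finset.single_le_sum (f := fun i => R^i/((i.factorial:ℕ):ℝ))
          (fun i _ => by positivity) hmem
      calc Real.exp (-R) * R^(k-1) / (((k-1).factorial:ℕ):ℝ)
          = Real.exp (-R) * (R^(k-1)/(((k-1).factorial:ℕ):ℝ)) := by ring
        _ ≤ Real.exp (-R) * S := mul_le_mul_of_nonneg_left h1 hepos.le
    · rw [hcdf2]
      have hterm : ∀ i ∈ Finset.range k,
          R^i / ((i.factorial:ℕ):ℝ) ≤ (R/(k:ℝ))^k * (((k:ℝ))^i / ((i.factorial:ℕ):ℝ)) := by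
        intro i hi
        have hik : i ≤ k := (Finset.mem_range.1 hi).le
        obtain ⟨m, hm⟩ := Nat.exists_eq_add_of_le hik
        have h1 : R ^ i ≤ (R/(k:ℝ))^k * (k:ℝ)^i := by
          rw [div_pow, div_mul_eq_mul_div, le_div_iff₀ (by positivity)]
          calc R^i * (k:ℝ)^k = R^i * (k:ℝ)^(i+m) := by rw [hm]
            _ ≤ R^(i+m) * (k:ℝ)^i := pow_mul_pow_le hk0.le hkR i m
            _ = R^k * (k:ℝ)^i := by rw [hm]
        calc R^i/((i.factorial:ℕ):ℝ) ≤ ((R/(k:ℝ))^k * (k:ℝ)^i)/((i.factorial:ℕ):ℝ) := by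
              gcongr
          _ = (R/(k:ℝ))^k * (((k:ℝ))^i/((i.factorial:ℕ):ℝ)) := by ring
      have hSle : S ≤ (R/(k:ℝ))^k * Real.exp (k:ℝ) := by
        calc S ≤ ∑ i ∈ Finset.range k, (R/(k:ℝ))^k * (((k:ℝ))^i/((i.factorial:ℕ):ℝ)) :=
              Finset.sum_le_sum hterm
          _ = (R/(k:ℝ))^k * ∑ i ∈ Finset.range k, ((k:ℝ))^i/((i.factorial:ℕ):ℝ) := by
              rw [Finset.mul_sum]
          _ ≤ (R/(k:ℝ))^k * Real.exp (k:ℝ) :=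
              mul_le_mul_of_nonneg_left (Real.sum_le_exp_of_nonneg hk0.le k) (by positivity)
      calc Real.exp (-R) * S ≤ Real.exp (-R) * ((R/(k:ℝ))^k * Real.exp (k:ℝ)) :=
            mul_le_mul_of_nonneg_left hSle hepos.le
        _ = Real.exp ((k:ℝ) - R) * (R/(k:ℝ))^k := by
            rw [sub_eq_add_neg, Real.exp_add]; ring

end
end

section
/- Under Assumption (LD), for a real shape parameter s > 0 let Γ_s denote a Gamma-distributed random variable with shape s and rate 1, i.e. P(Γ_s ≤ R) = (1/Γ(s))∫_0^R x^{s−1}e^{−x} dx. Then for every t ≥ 0: lim_{R→∞} −(1/v_R) · log P( Γ_{R + tΘ_R} ≤ R ) = J_γ(t). (This is the α = 0 instance of the paper's Lemma on the large-deviation tail of the radii; the three regimes of Assumption (LD) produce the three rate functions J_γ.) -/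
open MeasureTheory Filter Set Topology

noncomputable section

/-- The distribution function of a Gamma random variable with real shape `s > 0` and rate `1`:
`P(Γ_s ≤ R) = (1/Γ(s))∫_0^R x^{s−1} e^{−x} dx`. -/
def gammaCdfReal (s R : ℝ) : ℝ :=
  (Real.Gamma s)⁻¹ * ∫ x in Set.Ioc (0:ℝ) R, x ^ (s - 1) * Real.exp (-x)

namespace GammaLD

/-- The main term of the exponential rate. -/
def Mfun (Θ : ℝ → ℝ) (t R : ℝ) : ℝ :=
  (R + t * Θ R) * Real.log (R + t * Θ R) - (R + t * Θ R) - (R + t * Θ R) * Real.log R + R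

/-- The error term. -/
def Efun (Θ : ℝ → ℝ) (t R : ℝ) : ℝ :=
  Real.log (R + t * Θ R) + 3 + (R + t * Θ R) / (R - 1) + Real.log R

lemma integrableOn_integrand {s : ℝ} (hs : 0 < s) (R : ℝ) :
    IntegrableOn (fun x : ℝ => x ^ (s - 1) * Real.exp (-x)) (Ioc 0 R) := by
  have h : IntegrableOn (fun x : ℝ => Real.exp (-x) * x ^ (s - 1)) (Ioc 0 R) :=
    (Real.GammaIntegral_convergent hs).mono_set Ioc_subset_Ioi_self
  exact h.congr_fun (fun x _ => mul_comm _ _) measurableSet_Ioc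

lemma integrand_nonneg_ae {s R : ℝ} :
    0 ≤ᶠ[ae (volume.restrict (Ioc (0:ℝ) R))] fun x : ℝ => x ^ (s - 1) * Real.exp (-x) := by
  refine (ae_restrict_iff' measurableSet_Ioc).mpr (Eventually.of_forall fun x hx => ?_)
  exact mul_nonneg (Real.rpow_nonneg hx.1.le _) (Real.exp_nonneg _)

lemma int_lower {s R : ℝ} (hs : 1 ≤ s) (hR : 2 ≤ R) :
    (R - 1) ^ (s - 1) * Real.exp (-R) ≤ ∫ x in Ioc (0:ℝ) R, x ^ (s - 1) * Real.exp (-x) := by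
  have hs0 : (0:ℝ) < s := by linarith
  have hR1 : (0:ℝ) < R - 1 := by linarith
  have hint := integrableOn_integrand hs0 R
  have hsub : Ioc (R - 1) R ⊆ Ioc (0:ℝ) R := Ioc_subset_Ioc_left (by linarith)
  have hvol : (volume (Ioc (R - 1) R)).toReal = 1 := by
    rw [Real.volume_Ioc]
    norm_num
  have h1 : (R - 1) ^ (s - 1) * Real.exp (-R) * (volume (Ioc (R - 1) R)).toReal ≤
      ∫ x in Ioc (R - 1) R, x ^ (s - 1) * Real.exp (-x) := by
    refine le_trans (le_of_eq (by rw [smul_eq_mul, mul_comm]; rfl))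
      (setIntegral_ge_of_const_le (c := (R - 1) ^ (s - 1) * Real.exp (-R)) measurableSet_Ioc
      (by rw [Real.volume_Ioc]; exact ENNReal.ofReal_ne_top) (fun x hx => ?_)
      (hint.mono_set hsub))
    have hx0 : 0 < x := lt_of_le_of_lt hR1.le hx.1
    refine mul_le_mul (Real.rpow_le_rpow hR1.le hx.1.le (by linarith))
      (Real.exp_le_exp.mpr (by linarith [hx.2])) (Real.exp_nonneg _)
      (Real.rpow_nonneg hx0.le _)
  rw [hvol, mul_one] at h1
  refine h1.trans (setIntegral_mono_set hint integrand_nonneg_ae hsub.eventuallyLE)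

lemma int_upper {s R : ℝ} (hR : 1 ≤ R) (hsR : R + 1 ≤ s) :
    ∫ x in Ioc (0:ℝ) R, x ^ (s - 1) * Real.exp (-x) ≤ R ^ s * Real.exp (-R) := by
  have hR0 : (0:ℝ) < R := by linarith
  have hs0 : (0:ℝ) < s := by linarith
  have hpt : ∀ x ∈ Ioc (0:ℝ) R, x ^ (s - 1) * Real.exp (-x) ≤ R ^ (s - 1) * Real.exp (-R) := by
    intro x hx
    have hx0 : (0:ℝ) < x := hx.1
    have hxR : x ≤ R := hx.2
    rw [Real.rpow_def_of_pos hx0, Real.rpow_def_of_pos hR0, ← Real.exp_add, ← Real.exp_add]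
    apply Real.exp_le_exp.mpr
    have hlog : 1 - x / R ≤ Real.log R - Real.log x := by
      have h := Real.log_le_sub_one_of_pos (show (0:ℝ) < x / R by positivity)
      rw [Real.log_div hx0.ne' hR0.ne'] at h
      have h2 : x / R - 1 = -(1 - x / R) := by ring
      linarith
    have h3 : 0 ≤ 1 - x / R := by
      have : x / R ≤ 1 := by rw [div_le_one hR0]; exact hxR
      linarith
    have h4 : R * (1 - x / R) ≤ (s - 1) * (Real.log R - Real.log x) :=
      mul_le_mul (by linarith) hlog h3 (by linarith)
    have h5 : R * (1 - x / R) = R - x := by field_simp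
    nlinarith [h4, h5]
  have hconst : IntegrableOn (fun _ : ℝ => R ^ (s - 1) * Real.exp (-R)) (Ioc (0:ℝ) R) := by
    exact integrableOn_const (by rw [Real.volume_Ioc]; exact ENNReal.ofReal_ne_top)
  have h := setIntegral_mono_on (integrableOn_integrand hs0 R) hconst measurableSet_Ioc hpt
  rw [setIntegral_const, measureReal_def, Real.volume_Ioc, ENNReal.toReal_ofReal (by linarith), smul_eq_mul,
    sub_zero] at h
  have hpow : R ^ s = R ^ (s - 1) * R := by
    rw [← Real.rpow_add_one hR0.ne' (s - 1)]
    norm_num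
  calc ∫ x in Ioc (0:ℝ) R, x ^ (s - 1) * Real.exp (-x)
      ≤ R * (R ^ (s - 1) * Real.exp (-R)) := h
    _ = R ^ s * Real.exp (-R) := by rw [hpow]; ring

lemma int_pos {s R : ℝ} (hs : 1 ≤ s) (hR : 2 ≤ R) :
    0 < ∫ x in Ioc (0:ℝ) R, x ^ (s - 1) * Real.exp (-x) := by
  refine lt_of_lt_of_le ?_ (int_lower hs hR)
  have : (0:ℝ) < R - 1 := by linarith
  positivity

lemma int_le_gamma {s R : ℝ} (hs : 0 < s) :
    (∫ x in Ioc (0:ℝ) R, x ^ (s - 1) * Real.exp (-x)) ≤ Real.Gamma s := by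
  rw [Real.Gamma_eq_integral hs]
  have hcomm : (fun x : ℝ => x ^ (s - 1) * Real.exp (-x)) =
      fun x : ℝ => Real.exp (-x) * x ^ (s - 1) := by
    funext x; exact mul_comm _ _
  rw [hcomm]
  refine setIntegral_mono_set (Real.GammaIntegral_convergent hs) ?_
    Ioc_subset_Ioi_self.eventuallyLE
  refine (ae_restrict_iff' measurableSet_Ioi).mpr (Eventually.of_forall fun x hx => ?_)
  exact mul_nonneg (Real.exp_nonneg _) (Real.rpow_nonneg (le_of_lt hx) _)

lemma gamma_ge {s : ℝ} (hs : 2 ≤ s) :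
    (s - 1) ^ (s - 1) * Real.exp (-s) ≤ Real.Gamma s := by
  have hs0 : (0:ℝ) < s := by linarith
  refine (int_lower (by linarith) hs).trans ?_
  exact int_le_gamma hs0

lemma logGamma_lower {s : ℝ} (hs : 2 ≤ s) :
    s * Real.log s - s - Real.log s - 2 ≤ Real.log (Real.Gamma s) := by
  have h1 : (0:ℝ) < s - 1 := by linarith
  have hs0 : (0:ℝ) < s := by linarith
  have hΓ := gamma_ge hs
  have hpos : (0:ℝ) < (s - 1) ^ (s - 1) * Real.exp (-s) := by positivity
  have hlog := Real.log_le_log hpos hΓ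
  rw [Real.log_mul (by positivity) (Real.exp_ne_zero _), Real.log_rpow h1, Real.log_exp] at hlog
  have h2 : Real.log s - Real.log (s - 1) ≤ 1 / (s - 1) := by
    have h := Real.log_le_sub_one_of_pos (show (0:ℝ) < s / (s - 1) by positivity)
    rw [Real.log_div hs0.ne' h1.ne'] at h
    have h3 : s / (s - 1) - 1 = 1 / (s - 1) := by field_simp; ring
    linarith
  have h3 : (s - 1) * (Real.log s - Real.log (s - 1)) ≤ (s - 1) * (1 / (s - 1)) :=
    mul_le_mul_of_nonneg_left h2 h1.le
  have h4 : (s - 1) * (1 / (s - 1)) = 1 := by field_simp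
  have hexp : (s - 1) * Real.log (s - 1) =
      (s - 1) * Real.log s - (s - 1) * (Real.log s - Real.log (s - 1)) := by ring
  nlinarith [hlog, h3, h4, hexp]

lemma factorial_le_pow (n : ℕ) :
    (Nat.factorial n : ℝ) ≤ ((n : ℝ) + 1) ^ (n + 1) * Real.exp (-(n : ℝ)) := by
  induction n with
  | zero => simp [Nat.factorial]
  | succ n ih =>
    have hn1 : (0:ℝ) < (n : ℝ) + 1 := by positivity
    have hn2 : (0:ℝ) < (n : ℝ) + 2 := by positivity
    have hq : (0:ℝ) < ((n : ℝ) + 2) / ((n : ℝ) + 1) := by positivity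
    have hlog : (1:ℝ) / ((n : ℝ) + 2) ≤ Real.log (((n : ℝ) + 2) / ((n : ℝ) + 1)) := by
      have h := Real.log_le_sub_one_of_pos
        (show (0:ℝ) < ((n : ℝ) + 1) / ((n : ℝ) + 2) by positivity)
      rw [Real.log_div hn1.ne' hn2.ne'] at h
      rw [Real.log_div hn2.ne' hn1.ne']
      have h2 : ((n : ℝ) + 1) / ((n : ℝ) + 2) - 1 = -(1 / ((n : ℝ) + 2)) := by
        field_simp
        norm_num
      linarith
    have key : Real.exp 1 ≤ (((n : ℝ) + 2) / ((n : ℝ) + 1)) ^ (n + 2) := by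
      rw [← Real.exp_log (show (0:ℝ) < (((n : ℝ) + 2) / ((n : ℝ) + 1)) ^ (n + 2) from
        pow_pos hq _)]
      apply Real.exp_le_exp.mpr
      rw [Real.log_pow]
      have h1 : ((n : ℝ) + 2) * (1 / ((n : ℝ) + 2)) ≤
          ((n : ℝ) + 2) * Real.log (((n : ℝ) + 2) / ((n : ℝ) + 1)) :=
        mul_le_mul_of_nonneg_left hlog hn2.le
      have h2 : ((n : ℝ) + 2) * (1 / ((n : ℝ) + 2)) = 1 := by field_simp
      push_cast
      nlinarith [h1, h2]
    have hE : Real.exp (-(n : ℝ)) = Real.exp 1 * Real.exp (-((n : ℝ) + 1)) := by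
      rw [← Real.exp_add]; ring_nf
    have step1 : (Nat.factorial (n + 1) : ℝ) = ((n : ℝ) + 1) * (Nat.factorial n : ℝ) := by
      push_cast [Nat.factorial_succ]; ring
    have step2 : (Nat.factorial (n + 1) : ℝ) ≤ ((n : ℝ) + 1) ^ (n + 2) * Real.exp (-(n : ℝ)) := by
      rw [step1]
      calc ((n : ℝ) + 1) * (Nat.factorial n : ℝ)
          ≤ ((n : ℝ) + 1) * (((n : ℝ) + 1) ^ (n + 1) * Real.exp (-(n : ℝ))) :=
            mul_le_mul_of_nonneg_left ih hn1.le
        _ = ((n : ℝ) + 1) ^ (n + 2) * Real.exp (-(n : ℝ)) := by ring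
    have step3 : ((n : ℝ) + 1) ^ (n + 2) * Real.exp (-(n : ℝ)) ≤
        ((n : ℝ) + 2) ^ (n + 2) * Real.exp (-((n : ℝ) + 1)) := by
      rw [hE]
      have h1 : ((n : ℝ) + 1) ^ (n + 2) * (Real.exp 1 * Real.exp (-((n : ℝ) + 1))) ≤
          ((n : ℝ) + 1) ^ (n + 2) *
            ((((n : ℝ) + 2) / ((n : ℝ) + 1)) ^ (n + 2) * Real.exp (-((n : ℝ) + 1))) := by
        refine mul_le_mul_of_nonneg_left ?_ (by positivity)
        exact mul_le_mul_of_nonneg_right key (Real.exp_nonneg _)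
      refine le_trans h1 (le_of_eq ?_)
      rw [div_pow]
      rw [← mul_assoc]
      rw [mul_div_assoc']
      rw [mul_comm (((n : ℝ) + 1) ^ (n + 2)) _]
      rw [mul_div_assoc]
      rw [div_self (by positivity : (((n : ℝ) + 1) ^ (n + 2)) ≠ 0), mul_one]
    calc (Nat.factorial (n + 1) : ℝ) ≤ ((n : ℝ) + 1) ^ (n + 2) * Real.exp (-(n : ℝ)) := step2
      _ ≤ ((n : ℝ) + 2) ^ (n + 2) * Real.exp (-((n : ℝ) + 1)) := step3
      _ = (((n + 1 : ℕ) : ℝ) + 1) ^ ((n + 1) + 1) * Real.exp (-((n + 1 : ℕ) : ℝ)) := by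
          push_cast; ring_nf

lemma gamma_le_factorial {s : ℝ} (hs : 2 ≤ s) :
    Real.Gamma s ≤ (Nat.factorial ⌊s⌋₊ : ℝ) := by
  set n := ⌊s⌋₊ with hn
  have hs0 : (0:ℝ) < s := by linarith
  have h2n : 2 ≤ n := Nat.le_floor (by exact_mod_cast hs)
  have hns : (n : ℝ) ≤ s := Nat.floor_le hs0.le
  have hsn1 : s < (n : ℝ) + 1 := Nat.lt_floor_add_one s
  have hn0 : (0:ℝ) < (n : ℝ) := by
    have : (2:ℝ) ≤ (n : ℝ) := by exact_mod_cast h2n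
    linarith
  have hmem1 : (n : ℝ) ∈ Ioi (0:ℝ) := hn0
  have hmem2 : (n : ℝ) + 1 ∈ Ioi (0:ℝ) := by
    simp only [mem_Ioi]; linarith
  have key := Real.convexOn_log_Gamma.le_on_segment' hmem1 hmem2
    (a := (n : ℝ) + 1 - s) (b := s - (n : ℝ)) (by linarith) (by linarith) (by ring)
  rw [smul_eq_mul, smul_eq_mul] at key
  have hcombo : ((n : ℝ) + 1 - s) * (n : ℝ) + (s - (n : ℝ)) * ((n : ℝ) + 1) = s := by ring
  rw [hcombo] at key
  simp only [Function.comp_apply] at key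
  have hΓn : Real.Gamma ((n : ℝ)) = (Nat.factorial (n - 1) : ℝ) := by
    have h1 : (n : ℝ) = ((n - 1 : ℕ) : ℝ) + 1 := by
      have h2 : 1 ≤ n := by omega
      push_cast [Nat.cast_sub h2]
      ring
    rw [h1, Real.Gamma_nat_eq_factorial]
  have hΓn1 : Real.Gamma ((n : ℝ) + 1) = (Nat.factorial n : ℝ) := Real.Gamma_nat_eq_factorial n
  have hfacpos : (0:ℝ) < (Nat.factorial n : ℝ) := by exact_mod_cast Nat.factorial_pos n
  have hfacle : (Nat.factorial (n - 1) : ℝ) ≤ (Nat.factorial n : ℝ) := by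
    exact_mod_cast Nat.factorial_le (by omega : n - 1 ≤ n)
  have hmax : max (Real.log (Real.Gamma (n : ℝ))) (Real.log (Real.Gamma ((n : ℝ) + 1))) ≤
      Real.log (Nat.factorial n : ℝ) := by
    rw [hΓn, hΓn1]
    exact max_le (Real.log_le_log (by exact_mod_cast Nat.factorial_pos (n - 1)) hfacle) le_rfl
  have hfin := key.trans hmax
  exact (Real.log_le_log_iff (Real.Gamma_pos_of_pos hs0) hfacpos).mp hfin

lemma logGamma_upper {s : ℝ} (hs : 3 ≤ s) :
    Real.log (Real.Gamma s) ≤ s * Real.log s - s + Real.log s + 3 := by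
  set n := ⌊s⌋₊ with hn
  have hs0 : (0:ℝ) < s := by linarith
  have hns : (n : ℝ) ≤ s := Nat.floor_le hs0.le
  have hsn1 : s < (n : ℝ) + 1 := Nat.lt_floor_add_one s
  have h1 := gamma_le_factorial (by linarith : 2 ≤ s)
  have h2 := factorial_le_pow n
  have hlog : Real.log (Real.Gamma s) ≤
      Real.log (((n : ℝ) + 1) ^ (n + 1) * Real.exp (-(n : ℝ))) :=
    Real.log_le_log (Real.Gamma_pos_of_pos hs0) (h1.trans h2)
  rw [Real.log_mul (by positivity) (Real.exp_ne_zero _), Real.log_pow, Real.log_exp] at hlog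
  have hcast : ((n + 1 : ℕ) : ℝ) = (n : ℝ) + 1 := by push_cast; ring
  rw [hcast] at hlog
  have ha : (n : ℝ) + 1 ≤ s + 1 := by linarith
  have hm : ((n : ℝ) + 1) * Real.log ((n : ℝ) + 1) ≤ (s + 1) * Real.log (s + 1) := by
    refine mul_le_mul ha (Real.log_le_log (by positivity) ha) (Real.log_nonneg ?_) (by linarith)
    have h3 : (0:ℝ) ≤ (n : ℝ) := Nat.cast_nonneg n
    linarith
  have hls : Real.log (s + 1) ≤ Real.log s + 1 / s := by
    have h := Real.log_le_sub_one_of_pos (show (0:ℝ) < (s + 1) / s by positivity)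
    rw [Real.log_div (by linarith) hs0.ne'] at h
    have h3 : (s + 1) / s - 1 = 1 / s := by field_simp; ring
    linarith
  have hm2 : (s + 1) * Real.log (s + 1) ≤ (s + 1) * (Real.log s + 1 / s) :=
    mul_le_mul_of_nonneg_left hls (by linarith)
  have hm3 : (s + 1) * (Real.log s + 1 / s) = s * Real.log s + Real.log s + 1 + 1 / s := by
    field_simp; ring
  have h1s : 1 / s ≤ 1 := by rw [div_le_one hs0]; linarith
  linarith [hlog, hm, hm2]

lemma log_gammaCdf {s R : ℝ} (hs0 : 0 < s)
    (hI0 : 0 < ∫ x in Ioc (0:ℝ) R, x ^ (s - 1) * Real.exp (-x)) :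
    Real.log (gammaCdfReal s R) =
      Real.log (∫ x in Ioc (0:ℝ) R, x ^ (s - 1) * Real.exp (-x)) -
        Real.log (Real.Gamma s) := by
  have hΓ := Real.Gamma_pos_of_pos hs0
  rw [gammaCdfReal, Real.log_mul (inv_ne_zero hΓ.ne') hI0.ne', Real.log_inv]
  ring

lemma neg_log_cdf_nonneg {s R : ℝ} (hR : 2 ≤ R) (hs1 : 1 ≤ s) :
    0 ≤ -Real.log (gammaCdfReal s R) := by
  have hs0 : (0:ℝ) < s := by linarith
  have hΓ := Real.Gamma_pos_of_pos hs0
  have hI0 := int_pos hs1 hR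
  have hP1 : gammaCdfReal s R ≤ 1 := by
    rw [gammaCdfReal]
    rw [inv_mul_le_iff₀ hΓ, mul_one]
    exact int_le_gamma hs0
  have hP0 : 0 ≤ gammaCdfReal s R := by
    rw [gammaCdfReal]
    positivity
  simpa using Real.log_nonpos hP0 hP1

lemma neg_log_cdf_le' {s R : ℝ} (hR : 3 ≤ R) (hs : 3 ≤ s) (hRs : R ≤ s) :
    -Real.log (gammaCdfReal s R) ≤
      ((s * Real.log s - s - s * Real.log R + R) +
        (Real.log s + 3 + s / (R - 1) + Real.log R)) := by
  have hR2 : 2 ≤ R := by linarith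
  have hR1 : (0:ℝ) < R - 1 := by linarith
  have hR0 : (0:ℝ) < R := by linarith
  have hs0 : (0:ℝ) < s := by linarith
  have hI0 := int_pos (by linarith : 1 ≤ s) hR2
  have hIl := int_lower (by linarith : 1 ≤ s) hR2
  have hlogI : (s - 1) * Real.log (R - 1) + -R ≤
      Real.log (∫ x in Ioc (0:ℝ) R, x ^ (s - 1) * Real.exp (-x)) := by
    have h := Real.log_le_log (by positivity) hIl
    rwa [Real.log_mul (by positivity) (Real.exp_ne_zero _), Real.log_rpow hR1,
      Real.log_exp] at h
  have hΓu := logGamma_upper hs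
  have hd : Real.log R - Real.log (R - 1) ≤ 1 / (R - 1) := by
    have h := Real.log_le_sub_one_of_pos (show (0:ℝ) < R / (R - 1) by positivity)
    rw [Real.log_div hR0.ne' hR1.ne'] at h
    have h3 : R / (R - 1) - 1 = 1 / (R - 1) := by field_simp; ring
    linarith
  have hd2 : s * (Real.log R - Real.log (R - 1)) ≤ s / (R - 1) := by
    have h := mul_le_mul_of_nonneg_left hd hs0.le
    have h3 : s * (1 / (R - 1)) = s / (R - 1) := by ring
    linarith [h, h3.le, h3.ge]
  have hlR : Real.log (R - 1) ≤ Real.log R := Real.log_le_log hR1 (by linarith)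
  have key : s * Real.log R - (s - 1) * Real.log (R - 1) ≤ s / (R - 1) + Real.log R := by
    have hexp : s * Real.log R - (s - 1) * Real.log (R - 1) =
        s * (Real.log R - Real.log (R - 1)) + Real.log (R - 1) := by ring
    rw [hexp]
    linarith [hd2, hlR]
  rw [log_gammaCdf hs0 hI0, neg_sub]
  linarith [hΓu, hlogI, key]

lemma neg_log_cdf_ge' {s R : ℝ} (hR : 3 ≤ R) (hsR : R + 1 ≤ s) :
    ((s * Real.log s - s - s * Real.log R + R) -
        (Real.log s + 3 + s / (R - 1) + Real.log R)) ≤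
      -Real.log (gammaCdfReal s R) := by
  have hR2 : 2 ≤ R := by linarith
  have hR0 : (0:ℝ) < R := by linarith
  have hR1 : (0:ℝ) < R - 1 := by linarith
  have hs3 : 3 ≤ s := by linarith
  have hs0 : (0:ℝ) < s := by linarith
  have hI0 := int_pos (by linarith : 1 ≤ s) hR2
  have hIu := int_upper (by linarith : 1 ≤ R) hsR
  have hlogI : Real.log (∫ x in Ioc (0:ℝ) R, x ^ (s - 1) * Real.exp (-x)) ≤
      s * Real.log R + -R := by
    have h := Real.log_le_log hI0 hIu
    rwa [Real.log_mul (by positivity) (Real.exp_ne_zero _), Real.log_rpow hR0,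
      Real.log_exp] at h
  have hΓl := logGamma_lower (by linarith : 2 ≤ s)
  rw [log_gammaCdf hs0 hI0, neg_sub]
  have hE1 : 0 ≤ s / (R - 1) := by positivity
  have hE2 : 0 ≤ Real.log R := Real.log_nonneg (by linarith)
  linarith [hΓl, hlogI]

lemma phi_bound {y : ℝ} (h0 : 0 ≤ y) (h1 : y ≤ 1 / 2) :
    |(1 + y) * Real.log (1 + y) - y - y ^ 2 / 2| ≤ 4 * y ^ 3 := by
  have hy1 : |(-y)| < 1 := by rw [abs_neg, abs_of_nonneg h0]; linarith
  have h := Real.abs_log_sub_add_sum_range_le hy1 2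
  rw [Finset.sum_range_succ, Finset.sum_range_succ, Finset.sum_range_zero] at h
  norm_num [sub_neg_eq_add, abs_neg, abs_of_nonneg h0] at h
  -- h : |-y + y^2/2 + log (1+y)| ≤ y^3 / (1-y)
  have hub : y ^ 3 / (1 - y) ≤ 2 * y ^ 3 := by
    rw [div_le_iff₀ (by linarith)]
    nlinarith [pow_nonneg h0 3]
  obtain ⟨δ, hδdef⟩ : ∃ d : ℝ, d = Real.log (1 + y) - (y - y ^ 2 / 2) := ⟨_, rfl⟩
  have hδ' : -y + y ^ 2 / 2 + Real.log (1 + y) = δ := by rw [hδdef]; ring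
  have hδb : |δ| ≤ 2 * y ^ 3 := by
    rw [← hδ']
    exact h.trans hub
  have hlog : Real.log (1 + y) = y - y ^ 2 / 2 + δ := by rw [hδdef]; ring
  rw [hlog]
  rw [abs_le] at hδb ⊢
  have h4 : (0:ℝ) ≤ y ^ 3 * (1 - 2 * y) := by
    apply mul_nonneg (pow_nonneg h0 3); linarith
  constructor
  · nlinarith [hδb.1, hδb.2, pow_nonneg h0 3, h4,
      mul_le_mul_of_nonneg_left hδb.1 (show (0:ℝ) ≤ 1 + y by linarith)]
  · nlinarith [hδb.1, hδb.2, pow_nonneg h0 3, h4,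
      mul_le_mul_of_nonneg_left hδb.2 (show (0:ℝ) ≤ 1 + y by linarith)]

/-- Master squeeze lemma. -/
lemma master (Θ v : ℝ → ℝ) (t L : ℝ) (ht : 0 ≤ t)
    (hΘtop : Tendsto Θ atTop atTop)
    (hv0 : ∀ᶠ R in atTop, 0 < v R)
    (hinv : Tendsto (fun R => 1 / v R) atTop (𝓝 0))
    (hlogR : Tendsto (fun R => Real.log R / v R) atTop (𝓝 0))
    (hlogΘ : Tendsto (fun R => Real.log (Θ R) / v R) atTop (𝓝 0))
    (hΘR : Tendsto (fun R => Θ R / R / v R) atTop (𝓝 0))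
    (hM : Tendsto (fun R => Mfun Θ t R / v R) atTop (𝓝 L)) :
    Tendsto (fun R => -(Real.log (gammaCdfReal (R + t * Θ R) R)) / v R) atTop (𝓝 L) := by
  have hub1 : Tendsto (fun R => (Real.log (1 + t) + Real.log R + Real.log (Θ R)) / v R)
      atTop (𝓝 0) := by
    have h1 : Tendsto (fun R => Real.log (1 + t) * (1 / v R) + Real.log R / v R +
        Real.log (Θ R) / v R) atTop (𝓝 (Real.log (1 + t) * 0 + 0 + 0)) :=
      ((hinv.const_mul _).add hlogR).add hlogΘ
    rw [mul_zero, add_zero, add_zero] at h1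
    refine h1.congr fun R => ?_
    rw [mul_one_div, ← add_div, ← add_div]
  have he1 : Tendsto (fun R => Real.log (R + t * Θ R) / v R) atTop (𝓝 0) := by
    refine tendsto_of_tendsto_of_tendsto_of_le_of_le' tendsto_const_nhds hub1 ?_ ?_
    · filter_upwards [hv0, eventually_ge_atTop 1, hΘtop.eventually_gt_atTop 0] with R hv1 hR1 hΘ1
      have h2 : (1:ℝ) ≤ R + t * Θ R := by nlinarith
      exact div_nonneg (Real.log_nonneg h2) hv1.le
    · filter_upwards [hv0, eventually_ge_atTop 1, hΘtop.eventually_ge_atTop 1] with R hv1 hR1 hΘ1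
      refine (div_le_div_iff_of_pos_right hv1).mpr ?_
      have hsle : R + t * Θ R ≤ (1 + t) * (R * Θ R) := by
        nlinarith [mul_nonneg (mul_nonneg ht (by linarith : (0:ℝ) ≤ Θ R))
          (by linarith : (0:ℝ) ≤ R - 1),
          mul_nonneg (by linarith : (0:ℝ) ≤ R) (by linarith : (0:ℝ) ≤ Θ R - 1)]
      calc Real.log (R + t * Θ R) ≤ Real.log ((1 + t) * (R * Θ R)) :=
            Real.log_le_log (by nlinarith) hsle
        _ = Real.log (1 + t) + Real.log R + Real.log (Θ R) := by
            rw [Real.log_mul (by nlinarith) (by nlinarith), Real.log_mul (by nlinarith)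
              (by nlinarith)]
            ring
  have he2 : Tendsto (fun R => (3:ℝ) / v R) atTop (𝓝 0) := by
    have h1 := hinv.const_mul (3:ℝ)
    rw [mul_zero] at h1
    refine h1.congr fun R => ?_
    rw [mul_one_div]
  have hub3 : Tendsto (fun R => (2 + 2 * t * (Θ R / R)) / v R) atTop (𝓝 0) := by
    have h1 : Tendsto (fun R => 2 * (1 / v R) + 2 * t * (Θ R / R / v R)) atTop
        (𝓝 (2 * 0 + 2 * t * 0)) := (hinv.const_mul 2).add (hΘR.const_mul (2 * t))
    rw [mul_zero, mul_zero, add_zero] at h1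
    refine h1.congr fun R => ?_
    rw [mul_one_div, ← mul_div_assoc, ← add_div]
  have he3 : Tendsto (fun R => ((R + t * Θ R) / (R - 1)) / v R) atTop (𝓝 0) := by
    refine tendsto_of_tendsto_of_tendsto_of_le_of_le' tendsto_const_nhds hub3 ?_ ?_
    · filter_upwards [hv0, eventually_ge_atTop 2, hΘtop.eventually_gt_atTop 0] with R hv1 hR2 hΘ1
      have h1 : (0:ℝ) < R - 1 := by linarith
      have h2 : (0:ℝ) ≤ R + t * Θ R := by nlinarith
      exact div_nonneg (div_nonneg h2 h1.le) hv1.le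
    · filter_upwards [hv0, eventually_ge_atTop 2, hΘtop.eventually_gt_atTop 0] with R hv1 hR2 hΘ1
      refine (div_le_div_iff_of_pos_right hv1).mpr ?_
      have hR1 : (0:ℝ) < R - 1 := by linarith
      have hR0 : (0:ℝ) < R := by linarith
      have hs0 : (0:ℝ) ≤ R + t * Θ R := by nlinarith
      have k1 : (R + t * Θ R) / (R - 1) ≤ 2 * (R + t * Θ R) / R := by
        rw [div_le_div_iff₀ hR1 hR0]
        nlinarith
      have k2 : 2 * (R + t * Θ R) / R = 2 + 2 * t * (Θ R / R) := by field_simp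
      linarith [k1, k2.le, k2.ge]
  have hE : Tendsto (fun R => Efun Θ t R / v R) atTop (𝓝 0) := by
    have h1 : Tendsto (fun R => Real.log (R + t * Θ R) / v R + (3:ℝ) / v R +
        ((R + t * Θ R) / (R - 1)) / v R + Real.log R / v R) atTop (𝓝 (0 + 0 + 0 + 0)) :=
      ((he1.add he2).add he3).add hlogR
    norm_num at h1
    refine h1.congr fun R => ?_
    rw [← add_div, ← add_div, ← add_div]
    rfl
  have hg : Tendsto (fun R => Mfun Θ t R / v R - Efun Θ t R / v R) atTop (𝓝 L) := by
    have h := hM.sub hE; rwa [sub_zero] at h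
  have hh : Tendsto (fun R => Mfun Θ t R / v R + Efun Θ t R / v R) atTop (𝓝 L) := by
    have h := hM.add hE; rwa [add_zero] at h
  refine tendsto_of_tendsto_of_tendsto_of_le_of_le' hg hh ?_ ?_
  · rcases eq_or_lt_of_le ht with h0 | hpos
    · filter_upwards [hv0, eventually_ge_atTop 3, hΘtop.eventually_gt_atTop 0] with R hv1 hR3 hΘ1
      have hM0 : Mfun Θ t R = 0 := by
        simp only [Mfun, ← h0, zero_mul, add_zero]
        ring
      have hE0 : 0 ≤ Efun Θ t R := by
        simp only [Efun, ← h0, zero_mul, add_zero]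
        have h1 : 0 ≤ Real.log R := Real.log_nonneg (by linarith)
        have h2 : 0 ≤ R / (R - 1) := by
          apply div_nonneg (by linarith) (by linarith)
        linarith
      have hnn : 0 ≤ -Real.log (gammaCdfReal (R + t * Θ R) R) := by
        rw [← h0, zero_mul, add_zero]
        exact neg_log_cdf_nonneg (by linarith) (by linarith)
      rw [hM0]
      have h4 : 0 ≤ Efun Θ t R / v R := div_nonneg hE0 hv1.le
      have h5 : 0 ≤ -Real.log (gammaCdfReal (R + t * Θ R) R) / v R := div_nonneg hnn hv1.le
      rw [zero_div]
      linarith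
    · filter_upwards [hv0, eventually_ge_atTop 3, hΘtop.eventually_ge_atTop (1 / t)]
        with R hv1 hR3 hΘ1
      have h1 : 1 ≤ t * Θ R := by
        rw [div_le_iff₀ hpos] at hΘ1
        nlinarith [hΘ1]
      rw [← sub_div]
      refine (div_le_div_iff_of_pos_right hv1).mpr ?_
      exact neg_log_cdf_ge' hR3 (by linarith : R + 1 ≤ R + t * Θ R)
  · filter_upwards [hv0, eventually_ge_atTop 3, hΘtop.eventually_gt_atTop 0] with R hv1 hR3 hΘ1
    rw [← add_div]
    refine (div_le_div_iff_of_pos_right hv1).mpr ?_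
    have htΘ : 0 ≤ t * Θ R := mul_nonneg ht hΘ1.le
    exact neg_log_cdf_le' hR3 (by linarith : 3 ≤ R + t * Θ R) (by linarith : R ≤ R + t * Θ R)

end GammaLD

open GammaLD in
/-- Large-deviation tail of the Gamma radii under Assumption (LD): in each of the three
regimes (Θ_R/R → 0, → 1, → ∞) with the corresponding normalization `v` and rate function `J`,
`lim_{R→∞} −(1/v_R) log P(Γ_{R+tΘ_R} ≤ R) = J_γ(t)` for every `t ≥ 0`. -/
theorem gamma_large_deviation_tail
    (Θ : ℝ → ℝ) (hΘpos : ∀ R > (0:ℝ), 0 < Θ R)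
    (hLD : Tendsto (fun R => Θ R / Real.sqrt (R * Real.log R)) atTop atTop)
    (v J : ℝ → ℝ)
    (hreg :
      (Tendsto (fun R => Θ R / R) atTop (𝓝 0) ∧
        (∃ γ : ℝ, Tendsto (fun R => 2 * Real.log (Θ R) / Real.log R) atTop (𝓝 γ)) ∧
        v = (fun R => (Θ R) ^ 2 / R) ∧ J = fun t => t ^ 2 / 2) ∨
      (Tendsto (fun R => Θ R / R) atTop (𝓝 1) ∧
        v = Θ ∧ J = fun t => (1 + t) * Real.log (1 + t) - t) ∨
      (Tendsto (fun R => Θ R / R) atTop atTop ∧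
        v = (fun R => Θ R * Real.log (Θ R)) ∧
        ((∃ γ : ℝ, 0 < γ ∧
            Tendsto (fun R => 2 * Real.log (Θ R) / Real.log R) atTop (𝓝 γ) ∧
            J = fun t => t * (1 - 2 / γ)) ∨
          (Tendsto (fun R => 2 * Real.log (Θ R) / Real.log R) atTop atTop ∧
            J = fun t => t)))) :
    ∀ t : ℝ, 0 ≤ t →
      Tendsto (fun R => -(Real.log (gammaCdfReal (R + t * Θ R) R)) / v R)
        atTop (𝓝 (J t)) := by
  intro t ht
  -- common consequences of (LD)
  have hsqrtTop : Tendsto (fun R : ℝ => Real.sqrt (R * Real.log R)) atTop atTop := by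
    have h1 : Tendsto (fun R : ℝ => R * Real.log R) atTop atTop :=
      tendsto_id.atTop_mul_atTop₀ Real.tendsto_log_atTop
    have h2 : Tendsto Real.sqrt atTop atTop := by
      refine tendsto_atTop_atTop.mpr fun b => ⟨max 0 (b ^ 2), fun a ha => ?_⟩
      rcases le_or_gt b 0 with hb | hb
      · exact hb.trans (Real.sqrt_nonneg a)
      · have hb2 : b ^ 2 ≤ a := le_trans (le_max_right _ _) ha
        have h3 := Real.sqrt_le_sqrt hb2
        rwa [Real.sqrt_sq hb.le] at h3
    exact h2.comp h1
  have hΘtop : Tendsto Θ atTop atTop := by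
    refine tendsto_atTop_mono' atTop ?_ hsqrtTop
    filter_upwards [hLD.eventually_ge_atTop 1, hsqrtTop.eventually_gt_atTop 0] with R h1 h2
    rw [le_div_iff₀ h2] at h1
    linarith
  have hΘpos' : ∀ᶠ R in atTop, 0 < Θ R := hΘtop.eventually_gt_atTop 0
  -- the main term vanishes if t = 0
  have hMzero : ∀ w : ℝ → ℝ, t = 0 → Tendsto (fun R => Mfun Θ t R / w R) atTop (𝓝 0) := by
    intro w h0
    have hfz : (fun R => Mfun Θ t R / w R) = fun _ => (0:ℝ) := by
      funext R
      simp only [Mfun, h0, zero_mul, add_zero]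
      rw [show R * Real.log R - R - R * Real.log R + R = 0 from by ring, zero_div]
    rw [hfz]
    exact tendsto_const_nhds
  rcases hreg with ⟨hΘR0, -, hveq, hJeq⟩ | ⟨hΘR1, hveq, hJeq⟩ | ⟨hΘRtop, hveq, hsub⟩
  · -- Regime (i): Θ/R → 0, v = Θ²/R, J = t²/2
    subst hveq; subst hJeq
    show Tendsto (fun R => -(Real.log (gammaCdfReal (R + t * Θ R) R)) / (Θ R ^ 2 / R))
      atTop (𝓝 (t ^ 2 / 2))
    have hw : Tendsto (fun R => (Θ R / Real.sqrt (R * Real.log R)) ^ 2) atTop atTop := by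
      have h1 := hLD.atTop_mul_atTop₀ hLD
      exact h1.congr fun R => (pow_two _).symm
    have hveq' : ∀ᶠ R in atTop,
        Θ R ^ 2 / R = (Θ R / Real.sqrt (R * Real.log R)) ^ 2 * Real.log R := by
      filter_upwards [eventually_gt_atTop 1] with R hR1
      have hR0 : (0:ℝ) < R := by linarith
      have hlR : 0 < Real.log R := Real.log_pos hR1
      have hs2 : Real.sqrt (R * Real.log R) ^ 2 = R * Real.log R :=
        Real.sq_sqrt (by positivity)
      rw [div_pow, hs2]
      field_simp
    have hvtop : Tendsto (fun R => Θ R ^ 2 / R) atTop atTop := by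
      refine Tendsto.congr' ?_ (hw.atTop_mul_atTop₀ Real.tendsto_log_atTop)
      filter_upwards [hveq'] with R h
      exact h.symm
    have hv0 : ∀ᶠ R in atTop, 0 < Θ R ^ 2 / R := hvtop.eventually_gt_atTop 0
    have hinv : Tendsto (fun R => 1 / (Θ R ^ 2 / R)) atTop (𝓝 0) := by
      have h1 := hvtop.inv_tendsto_atTop
      exact h1.congr fun R => (one_div _).symm
    have hlogRv : Tendsto (fun R => Real.log R / (Θ R ^ 2 / R)) atTop (𝓝 0) := by
      have hwinv := hw.inv_tendsto_atTop
      refine Tendsto.congr' ?_ hwinv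
      filter_upwards [hveq', eventually_gt_atTop 1, hw.eventually_gt_atTop 0] with R h hR1 hw0
      have hlR : 0 < Real.log R := Real.log_pos hR1
      simp only [Pi.inv_apply]
      rw [h, mul_comm ((Θ R / Real.sqrt (R * Real.log R)) ^ 2) (Real.log R), ← div_div,
        div_self hlR.ne', one_div]
    have hΘleR : ∀ᶠ R in atTop, Θ R ≤ R := by
      have h1 := hΘR0.eventually (eventually_le_nhds one_pos)
      filter_upwards [h1, eventually_gt_atTop 0] with R h2 h3
      rw [div_le_one h3] at h2
      exact h2
    have hlogΘv : Tendsto (fun R => Real.log (Θ R) / (Θ R ^ 2 / R)) atTop (𝓝 0) := by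
      refine tendsto_of_tendsto_of_tendsto_of_le_of_le' tendsto_const_nhds hlogRv ?_ ?_
      · filter_upwards [hΘtop.eventually_ge_atTop 1, hv0] with R h1 h2
        exact div_nonneg (Real.log_nonneg h1) h2.le
      · filter_upwards [hΘleR, hΘpos', hv0] with R h1 h2 h3
        exact (div_le_div_iff_of_pos_right h3).mpr (Real.log_le_log h2 h1)
    have hΘRv : Tendsto (fun R => Θ R / R / (Θ R ^ 2 / R)) atTop (𝓝 0) := by
      have h1 := hΘR0.mul hinv
      rw [mul_zero] at h1
      exact h1.congr fun R => (div_eq_mul_one_div _ _).symm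
    have hMi : Tendsto (fun R => Mfun Θ t R / (Θ R ^ 2 / R)) atTop (𝓝 (t ^ 2 / 2)) := by
      rcases eq_or_lt_of_le ht with h0 | hpos
      · rw [show t ^ 2 / 2 = 0 from by rw [← h0]; norm_num]
        exact hMzero _ h0.symm
      · have habs : ∀ᶠ R in atTop,
            |Mfun Θ t R / (Θ R ^ 2 / R) - t ^ 2 / 2| ≤ 4 * t ^ 3 * (Θ R / R) := by
          have hsmall : ∀ᶠ R in atTop, t * Θ R / R ≤ 1 / 2 := by
            have h2 : Tendsto (fun R => t * (Θ R / R)) atTop (𝓝 (t * 0)) := hΘR0.const_mul t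
            rw [mul_zero] at h2
            have h3 := h2.eventually (eventually_le_nhds (by norm_num : (0:ℝ) < 1 / 2))
            filter_upwards [h3] with R h4
            rw [← mul_div_assoc] at h4
            exact h4
          filter_upwards [hsmall, hΘpos', eventually_gt_atTop 0] with R hx2 hΘ0 hR0
          have hx0 : 0 ≤ t * Θ R / R := div_nonneg (mul_nonneg ht hΘ0.le) hR0.le
          have hφ := phi_bound hx0 hx2
          have h1x : (0:ℝ) < 1 + t * Θ R / R := by linarith
          have hsid : R + t * Θ R = R * (1 + t * Θ R / R) := by field_simp
          have hlogs : Real.log (R + t * Θ R) =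
              Real.log R + Real.log (1 + t * Θ R / R) := by
            rw [hsid, Real.log_mul hR0.ne' h1x.ne']
          have hkey : Mfun Θ t R / (Θ R ^ 2 / R) - t ^ 2 / 2 =
              (R ^ 2 / Θ R ^ 2) * ((1 + t * Θ R / R) * Real.log (1 + t * Θ R / R) -
                t * Θ R / R - (t * Θ R / R) ^ 2 / 2) := by
            simp only [Mfun]
            rw [hlogs]
            field_simp
            ring
          rw [hkey, abs_mul, abs_of_pos (show (0:ℝ) < R ^ 2 / Θ R ^ 2 by positivity)]
          calc R ^ 2 / Θ R ^ 2 * |(1 + t * Θ R / R) * Real.log (1 + t * Θ R / R) -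
                t * Θ R / R - (t * Θ R / R) ^ 2 / 2|
              ≤ R ^ 2 / Θ R ^ 2 * (4 * (t * Θ R / R) ^ 3) :=
                mul_le_mul_of_nonneg_left hφ (by positivity)
            _ = 4 * t ^ 3 * (Θ R / R) := by field_simp
        have hglow : Tendsto (fun R => t ^ 2 / 2 - 4 * t ^ 3 * (Θ R / R)) atTop
            (𝓝 (t ^ 2 / 2)) := by
          have h1 : Tendsto (fun R => t ^ 2 / 2 - 4 * t ^ 3 * (Θ R / R)) atTop
              (𝓝 (t ^ 2 / 2 - 4 * t ^ 3 * 0)) := tendsto_const_nhds.sub (hΘR0.const_mul _)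
          rwa [mul_zero, sub_zero] at h1
        have hgup : Tendsto (fun R => t ^ 2 / 2 + 4 * t ^ 3 * (Θ R / R)) atTop
            (𝓝 (t ^ 2 / 2)) := by
          have h1 : Tendsto (fun R => t ^ 2 / 2 + 4 * t ^ 3 * (Θ R / R)) atTop
              (𝓝 (t ^ 2 / 2 + 4 * t ^ 3 * 0)) := tendsto_const_nhds.add (hΘR0.const_mul _)
          rwa [mul_zero, add_zero] at h1
        refine tendsto_of_tendsto_of_tendsto_of_le_of_le' hglow hgup ?_ ?_
        · filter_upwards [habs] with R h
          have h2 := (abs_le.mp h).1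
          linarith
        · filter_upwards [habs] with R h
          have h2 := (abs_le.mp h).2
          linarith
    exact master Θ (fun R => Θ R ^ 2 / R) t (t ^ 2 / 2) ht hΘtop hv0 hinv hlogRv hlogΘv
      hΘRv hMi
  · -- Regime (ii): Θ/R → 1, v = Θ, J = (1+t)log(1+t) − t
    subst hJeq
    rw [hveq]
    show Tendsto (fun R => -(Real.log (gammaCdfReal (R + t * Θ R) R)) / Θ R)
      atTop (𝓝 ((1 + t) * Real.log (1 + t) - t))
    have hv0 := hΘpos'
    have hinv : Tendsto (fun R => 1 / Θ R) atTop (𝓝 0) := by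
      have h1 := hΘtop.inv_tendsto_atTop
      exact h1.congr fun R => (one_div _).symm
    have hRΘ : Tendsto (fun R => R / Θ R) atTop (𝓝 1) := by
      have h1 := hΘR1.inv₀ one_ne_zero
      rw [inv_one] at h1
      exact h1.congr fun R => inv_div _ _
    have hlogx : Tendsto (fun x : ℝ => Real.log x / x) atTop (𝓝 0) := by
      simpa using Real.isLittleO_log_id_atTop.tendsto_div_nhds_zero
    have hlogRv : Tendsto (fun R => Real.log R / Θ R) atTop (𝓝 0) := by
      have h1 := hlogx.mul hRΘ
      rw [zero_mul] at h1
      refine Tendsto.congr' ?_ h1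
      filter_upwards [eventually_gt_atTop 0, hΘpos'] with R hR0 hΘ0
      field_simp
    have hlogΘv : Tendsto (fun R => Real.log (Θ R) / Θ R) atTop (𝓝 0) := hlogx.comp hΘtop
    have hΘRv : Tendsto (fun R => Θ R / R / Θ R) atTop (𝓝 0) := by
      have h1 := hΘR1.mul hinv
      rw [mul_zero] at h1
      exact h1.congr fun R => (div_eq_mul_one_div _ _).symm
    have hMii : Tendsto (fun R => Mfun Θ t R / Θ R) atTop
        (𝓝 ((1 + t) * Real.log (1 + t) - t)) := by
      have hx : Tendsto (fun R => t * Θ R / R) atTop (𝓝 t) := by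
        have h1 := hΘR1.const_mul t
        rw [mul_one] at h1
        exact h1.congr fun R => (mul_div_assoc _ _ _).symm
      have hφc : ContinuousAt (fun x : ℝ => (1 + x) * Real.log (1 + x) - x) t := by
        have h1t : (0:ℝ) < 1 + t := by linarith
        have hc1 : ContinuousAt (fun x : ℝ => (1:ℝ) + x) t :=
          continuousAt_const.add continuousAt_id
        have hc2 : ContinuousAt Real.log (1 + t) := Real.continuousAt_log h1t.ne'
        exact (hc1.mul (hc2.comp hc1)).sub continuousAt_id
      have h2 : Tendsto (fun R => (1 + t * Θ R / R) * Real.log (1 + t * Θ R / R) -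
          t * Θ R / R) atTop (𝓝 ((1 + t) * Real.log (1 + t) - t)) := hφc.tendsto.comp hx
      have h3 := hRΘ.mul h2
      rw [one_mul] at h3
      refine Tendsto.congr' ?_ h3
      filter_upwards [hΘpos', eventually_gt_atTop 0] with R hΘ0 hR0
      have hx0 : 0 ≤ t * Θ R / R := div_nonneg (mul_nonneg ht hΘ0.le) hR0.le
      have h1x : (0:ℝ) < 1 + t * Θ R / R := by linarith
      have hsid : R + t * Θ R = R * (1 + t * Θ R / R) := by field_simp
      have hlogs : Real.log (R + t * Θ R) = Real.log R + Real.log (1 + t * Θ R / R) := by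
        rw [hsid, Real.log_mul hR0.ne' h1x.ne']
      simp only [Mfun]
      rw [hlogs]
      field_simp
      ring
    exact master Θ Θ t ((1 + t) * Real.log (1 + t) - t) ht hΘtop hv0 hinv hlogRv hlogΘv
      hΘRv hMii
  · -- Regime (iii): Θ/R → ∞, v = Θ log Θ
    subst hveq
    have hlogΘtop : Tendsto (fun R => Real.log (Θ R)) atTop atTop :=
      Real.tendsto_log_atTop.comp hΘtop
    have hvtop : Tendsto (fun R => Θ R * Real.log (Θ R)) atTop atTop :=
      hΘtop.atTop_mul_atTop₀ hlogΘtop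
    have hv0 : ∀ᶠ R in atTop, 0 < Θ R * Real.log (Θ R) := hvtop.eventually_gt_atTop 0
    have hinv : Tendsto (fun R => 1 / (Θ R * Real.log (Θ R))) atTop (𝓝 0) := by
      have h1 := hvtop.inv_tendsto_atTop
      exact h1.congr fun R => (one_div _).symm
    have hinvΘ : Tendsto (fun R => 1 / Θ R) atTop (𝓝 0) := by
      have h1 := hΘtop.inv_tendsto_atTop
      exact h1.congr fun R => (one_div _).symm
    have hinvlogΘ : Tendsto (fun R => 1 / Real.log (Θ R)) atTop (𝓝 0) := by
      have h1 := hlogΘtop.inv_tendsto_atTop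
      exact h1.congr fun R => (one_div _).symm
    have hlogΘv : Tendsto (fun R => Real.log (Θ R) / (Θ R * Real.log (Θ R))) atTop (𝓝 0) := by
      refine Tendsto.congr' ?_ hinvΘ
      filter_upwards [hΘpos', hlogΘtop.eventually_ge_atTop 1] with R h1 h2
      have h3 : Real.log (Θ R) ≠ 0 := by linarith
      field_simp
    have hRleΘ : ∀ᶠ R in atTop, R ≤ Θ R := by
      filter_upwards [hΘRtop.eventually_ge_atTop 1, eventually_gt_atTop 0] with R h1 h2
      rw [le_div_iff₀ h2] at h1
      linarith
    have hlogRv : Tendsto (fun R => Real.log R / (Θ R * Real.log (Θ R))) atTop (𝓝 0) := by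
      refine tendsto_of_tendsto_of_tendsto_of_le_of_le' tendsto_const_nhds hlogΘv ?_ ?_
      · filter_upwards [eventually_ge_atTop 1, hv0] with R h1 h2
        exact div_nonneg (Real.log_nonneg h1) h2.le
      · filter_upwards [hRleΘ, eventually_gt_atTop 0, hv0] with R h1 h2 h3
        exact (div_le_div_iff_of_pos_right h3).mpr (Real.log_le_log h2 h1)
    have hΘRv : Tendsto (fun R => Θ R / R / (Θ R * Real.log (Θ R))) atTop (𝓝 0) := by
      have hR1 : Tendsto (fun R : ℝ => 1 / R) atTop (𝓝 0) := by
        have h1 := tendsto_inv_atTop_zero (𝕜 := ℝ)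
        exact h1.congr fun R => (one_div _).symm
      have h1 := hR1.mul hinvlogΘ
      rw [mul_zero] at h1
      refine Tendsto.congr' ?_ h1
      filter_upwards [hΘpos', hlogΘtop.eventually_ge_atTop 1, eventually_gt_atTop 0]
        with R h1' h2' h3'
      have h4 : Real.log (Θ R) ≠ 0 := by linarith
      field_simp
    have hRΘ0 : Tendsto (fun R => R / Θ R) atTop (𝓝 0) := by
      have h1 := hΘRtop.inv_tendsto_atTop
      exact h1.congr fun R => inv_div _ _
    -- the main-term limit, for any limit c of log R / log Θ R
    have key : ∀ c : ℝ, Tendsto (fun R => Real.log R / Real.log (Θ R)) atTop (𝓝 c) →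
        Tendsto (fun R => Mfun Θ t R / (Θ R * Real.log (Θ R))) atTop (𝓝 (t - t * c)) := by
      intro c hc
      rcases eq_or_lt_of_le ht with h0 | hpos
      · rw [show t - t * c = 0 from by rw [← h0]; ring]
        exact hMzero _ h0.symm
      · have hA : Tendsto (fun R => (R + t * Θ R) / Θ R) atTop (𝓝 t) := by
          have h1 := hRΘ0.add tendsto_const_nhds (b := t)
          rw [zero_add] at h1
          refine Tendsto.congr' ?_ h1
          filter_upwards [hΘpos'] with R h2
          field_simp
        have hB : Tendsto (fun R => Real.log (R + t * Θ R) / Real.log (Θ R)) atTop (𝓝 1) := by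
          have hadd : Tendsto (fun R => R / Θ R + t) atTop (𝓝 t) := by
            have h1 := hRΘ0.add tendsto_const_nhds (b := t)
            rwa [zero_add] at h1
          have hnum : Tendsto (fun R => Real.log (R / Θ R + t)) atTop (𝓝 (Real.log t)) :=
            (Real.continuousAt_log hpos.ne').tendsto.comp hadd
          have h1 : Tendsto (fun R => 1 + Real.log (R / Θ R + t) / Real.log (Θ R)) atTop
              (𝓝 (1 + 0)) := tendsto_const_nhds.add (hnum.div_atTop hlogΘtop)
          rw [add_zero] at h1
          refine Tendsto.congr' ?_ h1
          filter_upwards [hΘpos', hlogΘtop.eventually_ge_atTop 1, eventually_gt_atTop 0]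
            with R h1' h2' h3'
          have hlΘ0 : Real.log (Θ R) ≠ 0 := by linarith
          have hx0 : (0:ℝ) < R / Θ R + t := by
            have := div_pos h3' h1'
            linarith
          have hsid : R + t * Θ R = Θ R * (R / Θ R + t) := by field_simp
          rw [hsid, Real.log_mul h1'.ne' hx0.ne', add_div, div_self hlΘ0]
        have htc : Tendsto (fun R => t * (1 / Real.log (Θ R))) atTop (𝓝 0) := by
          have h1 := hinvlogΘ.const_mul t
          rwa [mul_zero] at h1
        have hfin : Tendsto (fun R =>
            (R + t * Θ R) / Θ R * (Real.log (R + t * Θ R) / Real.log (Θ R)) -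
            (R + t * Θ R) / Θ R * (Real.log R / Real.log (Θ R)) -
            t * (1 / Real.log (Θ R))) atTop (𝓝 (t * 1 - t * c - 0)) :=
          ((hA.mul hB).sub (hA.mul hc)).sub htc
        rw [show t * 1 - t * c - 0 = t - t * c from by ring] at hfin
        refine Tendsto.congr' ?_ hfin
        filter_upwards [hΘpos', hlogΘtop.eventually_ge_atTop 1] with R h1' h2'
        have hlΘ0 : Real.log (Θ R) ≠ 0 := by linarith
        simp only [Mfun]
        field_simp
        ring
    rcases hsub with ⟨γ, hγ0, hγ, hJeq⟩ | ⟨hγtop, hJeq⟩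
    · subst hJeq
      show Tendsto (fun R => -(Real.log (gammaCdfReal (R + t * Θ R) R)) /
          (Θ R * Real.log (Θ R))) atTop (𝓝 (t * (1 - 2 / γ)))
      have hc : Tendsto (fun R => Real.log R / Real.log (Θ R)) atTop (𝓝 (2 / γ)) := by
        have h2 : Tendsto (fun R => 2 / (2 * Real.log (Θ R) / Real.log R)) atTop
            (𝓝 (2 / γ)) := tendsto_const_nhds.div hγ hγ0.ne'
        refine Tendsto.congr' ?_ h2
        filter_upwards [hlogΘtop.eventually_ge_atTop 1, eventually_gt_atTop 1] with R ha hb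
        have h3 : (0:ℝ) < Real.log R := Real.log_pos hb
        have h4 : Real.log (Θ R) ≠ 0 := by linarith
        field_simp
      have hMiii := key (2 / γ) hc
      rw [show t - t * (2 / γ) = t * (1 - 2 / γ) from by ring] at hMiii
      exact master Θ (fun R => Θ R * Real.log (Θ R)) t (t * (1 - 2 / γ)) ht hΘtop hv0 hinv
        hlogRv hlogΘv hΘRv hMiii
    · subst hJeq
      show Tendsto (fun R => -(Real.log (gammaCdfReal (R + t * Θ R) R)) /
          (Θ R * Real.log (Θ R))) atTop (𝓝 t)
      have hc : Tendsto (fun R => Real.log R / Real.log (Θ R)) atTop (𝓝 0) := by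
        have h1 := hγtop.inv_tendsto_atTop
        have h2 := h1.const_mul (2:ℝ)
        rw [mul_zero] at h2
        refine Tendsto.congr' ?_ h2
        filter_upwards [hlogΘtop.eventually_ge_atTop 1, eventually_gt_atTop 1] with R ha hb
        have h3 : (0:ℝ) < Real.log R := Real.log_pos hb
        have h4 : Real.log (Θ R) ≠ 0 := by linarith
        simp only [Pi.inv_apply]
        field_simp
      have hMiii := key 0 hc
      rw [show t - t * 0 = t from by ring] at hMiii
      exact master Θ (fun R => Θ R * Real.log (Θ R)) t t ht hΘtop hv0 hinv
        hlogRv hlogΘv hΘRv hMiii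

end
end

section
/- Fix β > 0 and, under Assumption (LD), define p_R(u) = max{u, R}^β · e^{u−R} (R/u)^u for u, R > 0. Then for every C > 0: sup_{x ∈ [0,C]} | (1/v_R) log p_R(R + xΘ_R) + J_γ(x) | → 0 as R → ∞, i.e. −(1/v_R) log p_R(R + xΘ_R) → J_γ(x) uniformly for x ∈ [0,C]. -/
open MeasureTheory Filter Set Topology

noncomputable section

/-- `p_R(u) = max{u,R}^β · e^{u−R} (R/u)^u`. -/
def pFun (β R u : ℝ) : ℝ :=
  (max u R) ^ β * Real.exp (u - R) * (R / u) ^ u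

private lemma aux_log_le {y : ℝ} (hy : 0 ≤ y) : Real.log (1 + y) ≤ y := by
  have := Real.log_le_sub_one_of_pos (show (0:ℝ) < 1 + y by linarith)
  linarith

private lemma aux_le_log {x : ℝ} (hx : 0 < x) : 1 - 1 / x ≤ Real.log x := by
  have := Real.log_le_sub_one_of_pos (show (0:ℝ) < x⁻¹ by positivity)
  rw [Real.log_inv] at this
  rw [one_div]
  linarith

private lemma aux_g_nonneg {y : ℝ} (hy : 0 ≤ y) : 0 ≤ (1 + y) * Real.log (1 + y) - y := by
  have h1 : (0:ℝ) < 1 + y := by linarith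
  have h2 := aux_le_log h1
  have h3 : (1 + y) * (1 - 1 / (1 + y)) ≤ (1 + y) * Real.log (1 + y) :=
    mul_le_mul_of_nonneg_left h2 h1.le
  have he : (1 + y) * (1 - 1 / (1 + y)) = y := by field_simp; ring
  linarith

private lemma aux_log_taylor {y : ℝ} (h0 : 0 ≤ y) (h1 : y ≤ 1 / 2) :
    |Real.log (1 + y) - y + y ^ 2 / 2| ≤ 2 * y ^ 3 := by
  have habs : |(-y)| < 1 := by
    rw [abs_neg, abs_of_nonneg h0]; linarith
  have h := Real.abs_log_sub_add_sum_range_le habs 2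
  have he : (1:ℝ) - -y = 1 + y := by ring
  rw [he] at h
  simp only [Finset.sum_range_succ, Finset.sum_range_zero, Nat.cast_zero, Nat.cast_one] at h
  have hy3 : |(-y)| ^ 3 = y ^ 3 := by
    rw [abs_neg, abs_of_nonneg h0]
  have habs2 : |(-y)| = y := by rw [abs_neg, abs_of_nonneg h0]
  rw [habs2] at h
  norm_num at h
  have hden : y ^ 3 / (1 - y) ≤ 2 * y ^ 3 := by
    rw [div_le_iff₀ (by linarith : (0:ℝ) < 1 - y)]
    nlinarith [mul_nonneg (pow_nonneg h0 3) (show (0:ℝ) ≤ 1 - 2 * y by linarith)]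
  have : |Real.log (1 + y) - y + y ^ 2 / 2| = |-y + y ^ 2 / 2 + Real.log (1 + y)| := by
    ring_nf
  rw [this]
  calc |-y + y ^ 2 / 2 + Real.log (1 + y)| ≤ y ^ 3 / (1 - y) := h
    _ ≤ 2 * y ^ 3 := hden

private lemma aux_g_taylor {y : ℝ} (h0 : 0 ≤ y) (h1 : y ≤ 1 / 2) :
    |(1 + y) * Real.log (1 + y) - y - y ^ 2 / 2| ≤ 4 * y ^ 3 := by
  have h := aux_log_taylor h0 h1
  have key : (1 + y) * Real.log (1 + y) - y - y ^ 2 / 2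
      = (1 + y) * (Real.log (1 + y) - y + y ^ 2 / 2) - y ^ 3 / 2 := by ring
  rw [key]
  have h2 : |(1 + y) * (Real.log (1 + y) - y + y ^ 2 / 2)| ≤ (1 + y) * (2 * y ^ 3) := by
    rw [abs_mul, abs_of_nonneg (by linarith : (0:ℝ) ≤ 1 + y)]
    exact mul_le_mul_of_nonneg_left h (by linarith)
  calc |(1 + y) * (Real.log (1 + y) - y + y ^ 2 / 2) - y ^ 3 / 2|
      ≤ |(1 + y) * (Real.log (1 + y) - y + y ^ 2 / 2)| + |y ^ 3 / 2| := abs_sub _ _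
    _ ≤ (1 + y) * (2 * y ^ 3) + y ^ 3 / 2 := by
        have : |y ^ 3 / 2| = y ^ 3 / 2 := abs_of_nonneg (by positivity)
        linarith [this, h2]
    _ ≤ 4 * y ^ 3 := by
        nlinarith [mul_nonneg (pow_nonneg h0 3) (show (0:ℝ) ≤ 1 - 2 * y by linarith)]

private lemma aux_phi_mono {a b : ℝ} (ha : 0 ≤ a) (hab : a ≤ b) :
    (1 + a) * Real.log (1 + a) ≤ (1 + b) * Real.log (1 + b) :=
  mul_le_mul (by linarith) (Real.log_le_log (by linarith) (by linarith))
    (Real.log_nonneg (by linarith)) (by linarith)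

private lemma aux_phi_lip' {a b M : ℝ} (hb : 0 ≤ b) (haM : a ≤ M) (hab : b ≤ a) :
    |(1 + a) * Real.log (1 + a) - (1 + b) * Real.log (1 + b)|
      ≤ (Real.log (1 + M) + 1 + M) * |a - b| := by
  have ha : 0 ≤ a := le_trans hb hab
  have h1a : (0:ℝ) < 1 + a := by linarith
  have h1b : (0:ℝ) < 1 + b := by linarith
  have hmono := aux_phi_mono hb hab
  have habs1 : |(1 + a) * Real.log (1 + a) - (1 + b) * Real.log (1 + b)|
      = (1 + a) * Real.log (1 + a) - (1 + b) * Real.log (1 + b) := abs_of_nonneg (by linarith)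
  have habs2 : |a - b| = a - b := abs_of_nonneg (by linarith)
  rw [habs1, habs2]
  -- log(1+a) - log(1+b) ≤ (a-b)/(1+b)
  have hd : Real.log (1 + a) - Real.log (1 + b) ≤ (a - b) / (1 + b) := by
    have := Real.log_le_sub_one_of_pos (show (0:ℝ) < (1 + a) / (1 + b) by positivity)
    rw [Real.log_div h1a.ne' h1b.ne'] at this
    have he : (1 + a) / (1 + b) - 1 = (a - b) / (1 + b) := by field_simp; ring
    linarith [he ▸ this]
  have hlogb : Real.log (1 + b) ≤ Real.log (1 + M) :=
    Real.log_le_log h1b (by linarith)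
  have hlogbnn : 0 ≤ Real.log (1 + b) := Real.log_nonneg (by linarith)
  have hfrac : (1 + a) * ((a - b) / (1 + b)) ≤ (1 + M) * (a - b) := by
    rw [mul_div_assoc', div_le_iff₀ h1b]
    have hM0 : 0 ≤ M := le_trans ha haM
    nlinarith [mul_nonneg (sub_nonneg.2 hab) (show (0:ℝ) ≤ (1 + M) * (1 + b) - (1 + a) by nlinarith [mul_nonneg hM0 hb])]
  have hsplit : (1 + a) * Real.log (1 + a) - (1 + b) * Real.log (1 + b)
      = (1 + a) * (Real.log (1 + a) - Real.log (1 + b)) + (a - b) * Real.log (1 + b) := by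
    ring
  rw [hsplit]
  have h2 : (1 + a) * (Real.log (1 + a) - Real.log (1 + b)) ≤ (1 + a) * ((a - b) / (1 + b)) :=
    mul_le_mul_of_nonneg_left hd h1a.le
  have h3 : (a - b) * Real.log (1 + b) ≤ (a - b) * Real.log (1 + M) :=
    mul_le_mul_of_nonneg_left hlogb (by linarith)
  nlinarith

private lemma aux_phi_lip {a b M : ℝ} (ha : 0 ≤ a) (hb : 0 ≤ b) (haM : a ≤ M) (hbM : b ≤ M) :
    |(1 + a) * Real.log (1 + a) - (1 + b) * Real.log (1 + b)|
      ≤ (Real.log (1 + M) + 1 + M) * |a - b| := by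
  rcases le_total b a with hab | hab
  · exact aux_phi_lip' hb haM hab
  · have := aux_phi_lip' ha hbM hab
    rwa [abs_sub_comm, abs_sub_comm b a] at this

private lemma aux_log_pFun {β R u : ℝ} (hR : 0 < R) (hu : R ≤ u) :
    Real.log (pFun β R u) = β * Real.log u + (u - R) + u * (Real.log R - Real.log u) := by
  have hu0 : 0 < u := lt_of_lt_of_le hR hu
  have h1 : max u R = u := max_eq_left hu
  rw [pFun, h1, Real.log_mul (by positivity) (by positivity),
    Real.log_mul (by positivity) (by positivity), Real.log_rpow hu0, Real.log_exp,
    Real.log_rpow (by positivity), Real.log_div hR.ne' hu0.ne']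
  try ring

private lemma aux_squeeze {f : ℝ → ℝ → ℝ} {J : ℝ → ℝ} {s : Set ℝ} {B : ℝ → ℝ}
    (hB : Tendsto B atTop (𝓝 0))
    (h : ∀ᶠ R in atTop, ∀ x ∈ s, |f R x - J x| ≤ B R) :
    TendstoUniformlyOn f J atTop s := by
  rw [Metric.tendstoUniformlyOn_iff]
  intro ε hε
  have hB' : ∀ᶠ R in atTop, |B R| < ε := by
    have habs : Tendsto (fun R => |B R|) atTop (𝓝 0) := by
      simpa using hB.abs
    exact habs.eventually_lt_const hε
  filter_upwards [h, hB'] with R h1 h2 x hx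
  rw [Real.dist_eq]
  calc |J x - f R x| = |f R x - J x| := abs_sub_comm _ _
    _ ≤ B R := h1 x hx
    _ ≤ |B R| := le_abs_self _
    _ < ε := h2

set_option maxHeartbeats 2000000 in
/-- Under Assumption (LD), `−(1/v_R) log p_R(R + xΘ_R) → J_γ(x)` uniformly for
`x ∈ [0,C]`, for every `C > 0`. -/
theorem pFun_uniform_large_deviation
    (β : ℝ) (hβ : 0 < β)
    (Θ : ℝ → ℝ) (hΘpos : ∀ R > (0:ℝ), 0 < Θ R)
    (hLD : Tendsto (fun R => Θ R / Real.sqrt (R * Real.log R)) atTop atTop)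
    (v J : ℝ → ℝ)
    (hreg :
      (Tendsto (fun R => Θ R / R) atTop (𝓝 0) ∧
        (∃ γ : ℝ, Tendsto (fun R => 2 * Real.log (Θ R) / Real.log R) atTop (𝓝 γ)) ∧
        v = (fun R => (Θ R) ^ 2 / R) ∧ J = fun t => t ^ 2 / 2) ∨
      (Tendsto (fun R => Θ R / R) atTop (𝓝 1) ∧
        v = Θ ∧ J = fun t => (1 + t) * Real.log (1 + t) - t) ∨
      (Tendsto (fun R => Θ R / R) atTop atTop ∧
        v = (fun R => Θ R * Real.log (Θ R)) ∧
        ((∃ γ : ℝ, 0 < γ ∧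
            Tendsto (fun R => 2 * Real.log (Θ R) / Real.log R) atTop (𝓝 γ) ∧
            J = fun t => t * (1 - 2 / γ)) ∨
          (Tendsto (fun R => 2 * Real.log (Θ R) / Real.log R) atTop atTop ∧
            J = fun t => t)))) :
    ∀ C : ℝ, 0 < C →
      TendstoUniformlyOn
        (fun R : ℝ => fun x : ℝ => -(Real.log (pFun β R (R + x * Θ R))) / v R)
        J atTop (Set.Icc 0 C) := by
  intro C hC
  -- eventually Θ R ≥ √(R log R)
  have hΘev : ∀ᶠ R in atTop, Real.sqrt (R * Real.log R) ≤ Θ R := by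
    filter_upwards [hLD.eventually_ge_atTop 1, eventually_ge_atTop (3:ℝ)] with R h1 h3
    have hlog : (0:ℝ) < Real.log R := Real.log_pos (by linarith)
    have hs : 0 < Real.sqrt (R * Real.log R) := Real.sqrt_pos.2 (by positivity)
    rw [le_div_iff₀ hs, one_mul] at h1
    exact h1
  have hRlogRtop : Tendsto (fun R : ℝ => R * Real.log R) atTop atTop := by
    apply tendsto_atTop_mono' atTop _ tendsto_id
    filter_upwards [eventually_ge_atTop (3:ℝ)] with R h3
    have hlog : (1:ℝ) ≤ Real.log R := by
      rw [show (1:ℝ) = Real.log (Real.exp 1) from (Real.log_exp 1).symm]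
      exact Real.log_le_log (Real.exp_pos 1) (by
        have := Real.exp_one_lt_d9
        linarith)
    calc (id R : ℝ) = R * 1 := (mul_one R).symm
      _ ≤ R * Real.log R := by
        apply mul_le_mul_of_nonneg_left hlog (by linarith)
  have hsqrt_top : Tendsto (fun R : ℝ => Real.sqrt (R * Real.log R)) atTop atTop := by
    have h2 : Tendsto Real.sqrt atTop atTop := by
      apply (tendsto_rpow_atTop (by norm_num : (0:ℝ) < 1/2)).congr'
      filter_upwards with x using (Real.sqrt_eq_rpow x).symm
    exact h2.comp hRlogRtop
  have hΘtop : Tendsto Θ atTop atTop := tendsto_atTop_mono' atTop hΘev hsqrt_top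
  have hΘinv : Tendsto (fun R => 1 / Θ R) atTop (𝓝 0) := by
    exact hΘtop.inv_tendsto_atTop.congr (fun R => by simp [Pi.inv_apply, one_div])
  have hΘposev : ∀ᶠ R in atTop, 0 < Θ R := by
    filter_upwards [eventually_gt_atTop (0:ℝ)] with R hR using hΘpos R hR
  have hRlogR : Tendsto (fun R => R * Real.log R / Θ R ^ 2) atTop (𝓝 0) := by
    have h0 : Tendsto (fun R => Real.sqrt (R * Real.log R) / Θ R) atTop (𝓝 0) := by
      refine hLD.inv_tendsto_atTop.congr fun R => ?_
      simp [Pi.inv_apply, inv_div]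
    have h1 : Tendsto (fun R => (Real.sqrt (R * Real.log R) / Θ R) ^ 2) atTop (𝓝 0) := by
      simpa using h0.pow 2
    apply h1.congr'
    filter_upwards [eventually_ge_atTop (3:ℝ), hΘposev] with R h3 hΘ
    have hlog : (0:ℝ) ≤ Real.log R := Real.log_nonneg (by linarith)
    rw [div_pow, Real.sq_sqrt (by positivity)]
  have hlogΘtop : Tendsto (fun R => Real.log (Θ R)) atTop atTop :=
    Real.tendsto_log_atTop.comp hΘtop
  rcases hreg with ⟨hΘR, -, hv, hJ⟩ | ⟨hΘR, hv, hJ⟩ | ⟨hΘR, hv, hsub⟩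
  · subst hv; subst hJ
    apply aux_squeeze (B := fun R => 4 * C ^ 3 * (Θ R / R) + β * (R * Real.log R / Θ R ^ 2)
        + β * C * (1 / Θ R))
    · have h := ((hΘR.const_mul (4 * C ^ 3)).add (hRlogR.const_mul β)).add
        (hΘinv.const_mul (β * C))
      simpa using h
    · have hsmall : ∀ᶠ R in atTop, Θ R / R < 1 / (2 * C) :=
        hΘR.eventually_lt_const (by positivity)
      filter_upwards [eventually_ge_atTop (3:ℝ), hΘposev, hsmall] with R h3 hΘ hsm x hx
      obtain ⟨hx0, hxC⟩ := hx
      have hR0 : (0:ℝ) < R := by linarith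
      set s := Θ R / R with hs_def
      have hs0 : 0 < s := by rw [hs_def]; positivity
      have hΘeq : Θ R = s * R := by rw [hs_def]; field_simp
      set y := x * s with hy_def
      have hy0 : 0 ≤ y := by rw [hy_def]; positivity
      have hyC : y ≤ C * s := by
        rw [hy_def]; exact mul_le_mul_of_nonneg_right hxC hs0.le
      have hCs : C * s ≤ 1 / 2 := by
        have h2 : C * s ≤ C * (1 / (2 * C)) := mul_le_mul_of_nonneg_left hsm.le hC.le
        have h2' : C * (1 / (2 * C)) = 1 / 2 := by field_simp
        linarith
      have hyhalf : y ≤ 1 / 2 := le_trans hyC hCs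
      have h1y : (0:ℝ) < 1 + y := by linarith
      have hRu : R ≤ R + x * Θ R := by nlinarith [mul_nonneg hx0 hΘ.le]
      have hueq : R + x * Θ R = R * (1 + y) := by rw [hy_def, hΘeq]; ring
      have hLu : Real.log (R + x * Θ R) = Real.log R + Real.log (1 + y) := by
        rw [hueq, Real.log_mul hR0.ne' h1y.ne']
      have hLR0 : (0:ℝ) ≤ Real.log R := Real.log_nonneg (by linarith)
      show |(-(Real.log (pFun β R (R + x * Θ R))) / (Θ R ^ 2 / R)) - x ^ 2 / 2|
          ≤ 4 * C ^ 3 * s + β * (R * Real.log R / Θ R ^ 2) + β * C * (1 / Θ R)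
      have hfeq : -(Real.log (pFun β R (R + x * Θ R))) / (Θ R ^ 2 / R)
          = ((1 + y) * Real.log (1 + y) - y) / s ^ 2
            - β * (Real.log R + Real.log (1 + y)) / (R * s ^ 2) := by
        rw [aux_log_pFun hR0 hRu, hLu, hueq, hΘeq, hy_def]
        field_simp
        ring
      rw [hfeq]
      have htay := aux_g_taylor hy0 hyhalf
      have hx2 : x ^ 2 / 2 = (y ^ 2 / 2) / s ^ 2 := by
        rw [hy_def]; field_simp
      have hdiff : ((1 + y) * Real.log (1 + y) - y) / s ^ 2
            - β * (Real.log R + Real.log (1 + y)) / (R * s ^ 2) - x ^ 2 / 2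
          = ((1 + y) * Real.log (1 + y) - y - y ^ 2 / 2) / s ^ 2
            - β * (Real.log R + Real.log (1 + y)) / (R * s ^ 2) := by
        rw [hx2]; ring
      rw [hdiff]
      have hT1 : |((1 + y) * Real.log (1 + y) - y - y ^ 2 / 2) / s ^ 2| ≤ 4 * C ^ 3 * s := by
        rw [abs_div, abs_of_pos (by positivity : (0:ℝ) < s ^ 2),
          div_le_iff₀ (by positivity : (0:ℝ) < s ^ 2)]
        calc |(1 + y) * Real.log (1 + y) - y - y ^ 2 / 2| ≤ 4 * y ^ 3 := htay
          _ ≤ 4 * C ^ 3 * s * s ^ 2 := by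
              have hxC3 : x ^ 3 ≤ C ^ 3 := pow_le_pow_left₀ hx0 hxC 3
              have hye : y ^ 3 = x ^ 3 * s ^ 3 := by rw [hy_def]; ring
              rw [hye]
              nlinarith [pow_pos hs0 3, pow_pos hs0 2, mul_le_mul_of_nonneg_right hxC3
                (le_of_lt (pow_pos hs0 3))]
      have hlog1y : Real.log (1 + y) ≤ y := aux_log_le hy0
      have hlog1y0 : 0 ≤ Real.log (1 + y) := Real.log_nonneg (by linarith)
      set T2 := β * (Real.log R + Real.log (1 + y)) / (R * s ^ 2) with hT2_def
      have hT2nn : 0 ≤ T2 := by rw [hT2_def]; positivity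
      have hT2' : T2 ≤ β * (R * Real.log R / Θ R ^ 2) + β * C * (1 / Θ R) := by
        have he1 : β * Real.log R / (R * s ^ 2) = β * (R * Real.log R / Θ R ^ 2) := by
          rw [hΘeq]; field_simp
        have he2 : β * y / (R * s ^ 2) = β * x * (1 / Θ R) := by
          rw [hy_def, hΘeq]; field_simp
        have he3 : β * Real.log (1 + y) / (R * s ^ 2) ≤ β * y / (R * s ^ 2) := by
          gcongr
        have he4 : β * x * (1 / Θ R) ≤ β * C * (1 / Θ R) := by
          gcongr
        have hsplit : T2 = β * Real.log R / (R * s ^ 2)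
            + β * Real.log (1 + y) / (R * s ^ 2) := by rw [hT2_def]; ring
        rw [hsplit, he1]
        rw [he2] at he3
        linarith
      calc |((1 + y) * Real.log (1 + y) - y - y ^ 2 / 2) / s ^ 2 - T2|
          ≤ |((1 + y) * Real.log (1 + y) - y - y ^ 2 / 2) / s ^ 2| + |T2| := abs_sub _ _
        _ ≤ 4 * C ^ 3 * s + (β * (R * Real.log R / Θ R ^ 2) + β * C * (1 / Θ R)) := by
            rw [abs_of_nonneg hT2nn]
            exact add_le_add hT1 hT2'
        _ = 4 * C ^ 3 * s + β * (R * Real.log R / Θ R ^ 2) + β * C * (1 / Θ R) := by ring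
  · subst hJ; rw [hv]
    have habs1 : Tendsto (fun R => |Θ R / R - 1|) atTop (𝓝 0) := by
      have := (hΘR.sub (tendsto_const_nhds (x := (1:ℝ)))).abs
      simpa using this
    set K0 := (1 + 2 * C) * Real.log (1 + 2 * C) with hK0_def
    set K := Real.log (1 + 2 * C) + 2 + 2 * C with hK_def
    apply aux_squeeze (B := fun R => (2 * K0 + K * C) * |Θ R / R - 1|
        + β * (Real.log R / Θ R) + β * Real.log (1 + 2 * C) * (1 / Θ R))
    · have h2 : Tendsto (fun R => Real.log R / Θ R) atTop (𝓝 0) := by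
        have ha : Tendsto (fun R : ℝ => Real.log R / R) atTop (𝓝 0) := by
          have := Real.isLittleO_log_id_atTop.tendsto_div_nhds_zero
          simpa [id] using this
        have hb : Tendsto (fun R => R / Θ R) atTop (𝓝 1) := by
          have := hΘR.inv₀ one_ne_zero
          simpa [inv_div] using this
        have hc := ha.mul hb
        rw [zero_mul] at hc
        apply hc.congr'
        filter_upwards [eventually_gt_atTop (0:ℝ), hΘposev] with R hR hΘ
        field_simp
      have h := ((habs1.const_mul (2 * K0 + K * C)).add (h2.const_mul β)).add
        (hΘinv.const_mul (β * Real.log (1 + 2 * C)))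
      simpa only [mul_zero, add_zero] using h
    · filter_upwards [eventually_ge_atTop (3:ℝ), hΘposev,
        habs1.eventually_lt_const (by norm_num : (0:ℝ) < 1/2)] with R h3 hΘ ht x hx
      obtain ⟨hx0, hxC⟩ := hx
      have hR0 : (0:ℝ) < R := by linarith
      set t := Θ R / R with ht_def
      have ht0 : 0 < t := by rw [ht_def]; positivity
      have hthalf : 1/2 < t := by
        have := abs_lt.1 ht
        linarith [this.1]
      have ht32 : t < 3/2 := by
        have := abs_lt.1 ht
        linarith [this.2]
      have hΘeq : Θ R = t * R := by rw [ht_def]; field_simp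
      set y := x * t with hy_def
      have hy0 : 0 ≤ y := by rw [hy_def]; positivity
      have hy2C : y ≤ 2 * C := by
        rw [hy_def]
        nlinarith
      have hx2C : x ≤ 2 * C := by linarith
      have h1y : (0:ℝ) < 1 + y := by linarith
      have h1x : (0:ℝ) < 1 + x := by linarith
      have hRu : R ≤ R + x * Θ R := by nlinarith [mul_nonneg hx0 hΘ.le]
      have hueq : R + x * Θ R = R * (1 + y) := by rw [hy_def, hΘeq]; ring
      have hLu : Real.log (R + x * Θ R) = Real.log R + Real.log (1 + y) := by
        rw [hueq, Real.log_mul hR0.ne' h1y.ne']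
      have hLR0 : (0:ℝ) ≤ Real.log R := Real.log_nonneg (by linarith)
      show |(-(Real.log (pFun β R (R + x * Θ R))) / Θ R) - ((1 + x) * Real.log (1 + x) - x)|
          ≤ (2 * K0 + K * C) * |t - 1| + β * (Real.log R / Θ R)
            + β * Real.log (1 + 2 * C) * (1 / Θ R)
      have hfeq : -(Real.log (pFun β R (R + x * Θ R))) / Θ R
          = ((1 + y) * Real.log (1 + y) - y) / t
            - β * (Real.log R + Real.log (1 + y)) / (t * R) := by
        rw [aux_log_pFun hR0 hRu, hLu, hueq, hΘeq, hy_def]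
        field_simp
        ring
      rw [hfeq]
      -- main term bound
      have hgy_nn : 0 ≤ (1 + y) * Real.log (1 + y) - y := aux_g_nonneg hy0
      have hgy_le : (1 + y) * Real.log (1 + y) - y ≤ K0 := by
        have h1 : (1 + y) * Real.log (1 + y) ≤ K0 := by
          rw [hK0_def]; exact aux_phi_mono hy0 hy2C
        linarith
      have hmain : |((1 + y) * Real.log (1 + y) - y) / t - ((1 + x) * Real.log (1 + x) - x)|
          ≤ (2 * K0 + K * C) * |t - 1| := by
        have hsplit : ((1 + y) * Real.log (1 + y) - y) / t - ((1 + x) * Real.log (1 + x) - x)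
            = ((1 + y) * Real.log (1 + y) - y) * (1 / t - 1)
              + (((1 + y) * Real.log (1 + y) - (1 + x) * Real.log (1 + x)) - (y - x)) := by
          field_simp
          ring
        rw [hsplit]
        have hb1 : |((1 + y) * Real.log (1 + y) - y) * (1 / t - 1)| ≤ 2 * K0 * |t - 1| := by
          rw [abs_mul]
          have h1t : |1 / t - 1| ≤ 2 * |t - 1| := by
            have he : 1 / t - 1 = (1 - t) / t := by field_simp
            rw [he, abs_div, abs_of_pos ht0, div_le_iff₀ ht0, abs_sub_comm]
            nlinarith [mul_nonneg (abs_nonneg (t - 1)) (show (0:ℝ) ≤ 2 * t - 1 by linarith)]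
          calc |(1 + y) * Real.log (1 + y) - y| * |1 / t - 1|
              ≤ K0 * (2 * |t - 1|) := by
                apply mul_le_mul _ h1t (abs_nonneg _) _
                · rw [abs_of_nonneg hgy_nn]; exact hgy_le
                · rw [hK0_def]
                  exact mul_nonneg (by linarith) (Real.log_nonneg (by linarith))
            _ = 2 * K0 * |t - 1| := by ring
        have hb2 : |((1 + y) * Real.log (1 + y) - (1 + x) * Real.log (1 + x)) - (y - x)|
            ≤ K * C * |t - 1| := by
          have hyx : |y - x| = x * |t - 1| := by
            rw [hy_def]
            rw [show x * t - x = x * (t - 1) by ring, abs_mul, abs_of_nonneg hx0]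
          have hlip := aux_phi_lip hy0 hx0 hy2C hx2C
          calc |((1 + y) * Real.log (1 + y) - (1 + x) * Real.log (1 + x)) - (y - x)|
              ≤ |(1 + y) * Real.log (1 + y) - (1 + x) * Real.log (1 + x)| + |y - x| :=
                abs_sub _ _
            _ ≤ (Real.log (1 + 2 * C) + 1 + 2 * C) * |y - x| + |y - x| := by
                linarith [hlip]
            _ = K * |y - x| := by rw [hK_def]; ring
            _ = K * (x * |t - 1|) := by rw [hyx]
            _ ≤ K * C * |t - 1| := by
                have hK0' : 0 ≤ K := by
                  rw [hK_def]
                  have := Real.log_nonneg (show (1:ℝ) ≤ 1 + 2 * C by linarith)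
                  linarith
                nlinarith [mul_nonneg (mul_nonneg hK0' (sub_nonneg.2 hxC))
                  (abs_nonneg (t - 1))]
        calc |((1 + y) * Real.log (1 + y) - y) * (1 / t - 1)
              + (((1 + y) * Real.log (1 + y) - (1 + x) * Real.log (1 + x)) - (y - x))|
            ≤ |((1 + y) * Real.log (1 + y) - y) * (1 / t - 1)|
              + |((1 + y) * Real.log (1 + y) - (1 + x) * Real.log (1 + x)) - (y - x)| :=
              abs_add_le _ _
          _ ≤ 2 * K0 * |t - 1| + K * C * |t - 1| := add_le_add hb1 hb2
          _ = (2 * K0 + K * C) * |t - 1| := by ring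
      -- error term bound
      set T2 := β * (Real.log R + Real.log (1 + y)) / (t * R) with hT2_def
      have hlog1y0 : 0 ≤ Real.log (1 + y) := Real.log_nonneg (by linarith)
      have hT2nn : 0 ≤ T2 := by rw [hT2_def]; positivity
      have hT2le : T2 ≤ β * (Real.log R / Θ R) + β * Real.log (1 + 2 * C) * (1 / Θ R) := by
        have hlogle : Real.log (1 + y) ≤ Real.log (1 + 2 * C) :=
          Real.log_le_log h1y (by linarith)
        have htR : t * R = Θ R := hΘeq.symm
        rw [hT2_def, htR]
        have hsplit : β * (Real.log R + Real.log (1 + y)) / Θ R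
            = β * (Real.log R / Θ R) + β * Real.log (1 + y) * (1 / Θ R) := by
          field_simp
        rw [hsplit]
        have : β * Real.log (1 + y) * (1 / Θ R) ≤ β * Real.log (1 + 2 * C) * (1 / Θ R) := by
          gcongr
        linarith
      calc |(((1 + y) * Real.log (1 + y) - y) / t - T2) - ((1 + x) * Real.log (1 + x) - x)|
          = |(((1 + y) * Real.log (1 + y) - y) / t - ((1 + x) * Real.log (1 + x) - x)) - T2| := by
            ring_nf
        _ ≤ |((1 + y) * Real.log (1 + y) - y) / t - ((1 + x) * Real.log (1 + x) - x)| + |T2| :=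
            abs_sub _ _
        _ ≤ (2 * K0 + K * C) * |t - 1|
            + (β * (Real.log R / Θ R) + β * Real.log (1 + 2 * C) * (1 / Θ R)) := by
            rw [abs_of_nonneg hT2nn]
            exact add_le_add hmain hT2le
        _ = (2 * K0 + K * C) * |t - 1| + β * (Real.log R / Θ R)
            + β * Real.log (1 + 2 * C) * (1 / Θ R) := by ring

  · subst hv
    obtain ⟨c, hc, hJc⟩ : ∃ c : ℝ,
        Tendsto (fun R => Real.log R / Real.log (Θ R)) atTop (𝓝 c)
          ∧ J = fun t => t * (1 - c) := by
      have hev : (fun R => 2 / (2 * Real.log (Θ R) / Real.log R))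
          =ᶠ[atTop] fun R => Real.log R / Real.log (Θ R) := by
        filter_upwards [eventually_ge_atTop (3:ℝ), hlogΘtop.eventually_ge_atTop 1]
          with R h3 hlΘ
        have hlR : (0:ℝ) < Real.log R := Real.log_pos (by linarith)
        have hlΘ0 : (0:ℝ) < Real.log (Θ R) := by linarith
        field_simp
      rcases hsub with ⟨γ, hγ0, hγ, hJ⟩ | ⟨hγ, hJ⟩
      · refine ⟨2 / γ, ?_, hJ⟩
        have h := (tendsto_const_nhds (x := (2:ℝ))).div hγ hγ0.ne'
        exact h.congr' hev
      · refine ⟨0, ?_, by rw [hJ]; funext t; ring⟩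
        have h0 : Tendsto (fun R => 2 / (2 * Real.log (Θ R) / Real.log R)) atTop (𝓝 0) := by
          have h1 := hγ.inv_tendsto_atTop
          have h2 := h1.const_mul (2:ℝ)
          rw [mul_zero] at h2
          apply h2.congr
          intro R
          rw [Pi.inv_apply, ← div_eq_mul_inv]
        exact h0.congr' hev
    rw [hJc]
    apply aux_squeeze (B := fun R =>
        (1 + C * Real.log (1 + C) + 2 * C) * (1 / Real.log (Θ R))
        + C * |Real.log R / Real.log (Θ R) - c|
        + β * (Real.log (1 + C) + 1) * (1 / Θ R))
    · have h1 : Tendsto (fun R => 1 / Real.log (Θ R)) atTop (𝓝 0) := by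
        exact hlogΘtop.inv_tendsto_atTop.congr (fun R => by simp [Pi.inv_apply, one_div])
      have h2 : Tendsto (fun R => |Real.log R / Real.log (Θ R) - c|) atTop (𝓝 0) := by
        have := (hc.sub (tendsto_const_nhds (x := c))).abs
        simpa using this
      have h := ((h1.const_mul (1 + C * Real.log (1 + C) + 2 * C)).add (h2.const_mul C)).add
        (hΘinv.const_mul (β * (Real.log (1 + C) + 1)))
      simpa only [mul_zero, add_zero] using h
    · have hΘgeR : ∀ᶠ R in atTop, R ≤ Θ R := by
        filter_upwards [hΘR.eventually_ge_atTop 1, eventually_gt_atTop (0:ℝ)] with R h1 h0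
        rw [le_div_iff₀ h0, one_mul] at h1
        exact h1
      filter_upwards [eventually_ge_atTop (3:ℝ), hΘposev, hΘgeR,
        hlogΘtop.eventually_ge_atTop 1] with R h3 hΘ hΘR' hlΘ x hx
      obtain ⟨hx0, hxC⟩ := hx
      have hR0 : (0:ℝ) < R := by linarith
      have hlΘ0 : (0:ℝ) < Real.log (Θ R) := by linarith
      have hΘne : Θ R ≠ 0 := hΘ.ne'
      have hLΘne : Real.log (Θ R) ≠ 0 := hlΘ0.ne'
      have hRu : R ≤ R + x * Θ R := by nlinarith [mul_nonneg hx0 hΘ.le]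
      have hu0 : (0:ℝ) < R + x * Θ R := lt_of_lt_of_le hR0 hRu
      have hLR0 : (0:ℝ) ≤ Real.log R := Real.log_nonneg (by linarith)
      have hLu0 : (0:ℝ) ≤ Real.log (R + x * Θ R) := Real.log_nonneg (by linarith)
      have hlog1C : (0:ℝ) ≤ Real.log (1 + C) := Real.log_nonneg (by linarith)
      have hw : (0:ℝ) < 1 / Real.log (Θ R) := by positivity
      show |(-(Real.log (pFun β R (R + x * Θ R))) / (Θ R * Real.log (Θ R))) - x * (1 - c)|
          ≤ (1 + C * Real.log (1 + C) + 2 * C) * (1 / Real.log (Θ R))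
            + C * |Real.log R / Real.log (Θ R) - c|
            + β * (Real.log (1 + C) + 1) * (1 / Θ R)
      have hfeq : -(Real.log (pFun β R (R + x * Θ R))) / (Θ R * Real.log (Θ R))
          = x * (Real.log (R + x * Θ R) - Real.log R) / Real.log (Θ R)
            + R * (Real.log (R + x * Θ R) - Real.log R) / (Θ R * Real.log (Θ R))
            - x / Real.log (Θ R)
            - β * Real.log (R + x * Θ R) / (Θ R * Real.log (Θ R)) := by
        rw [aux_log_pFun hR0 hRu]
        field_simp
        ring
      rw [hfeq]
      have hEq : x * (Real.log (R + x * Θ R) - Real.log R) / Real.log (Θ R)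
            + R * (Real.log (R + x * Θ R) - Real.log R) / (Θ R * Real.log (Θ R))
            - x / Real.log (Θ R)
            - β * Real.log (R + x * Θ R) / (Θ R * Real.log (Θ R))
            - x * (1 - c)
          = x * (Real.log (R + x * Θ R) - Real.log (Θ R)) / Real.log (Θ R)
            - x * (Real.log R / Real.log (Θ R) - c)
            + R * (Real.log (R + x * Θ R) - Real.log R) / (Θ R * Real.log (Θ R))
            - x / Real.log (Θ R)
            - β * Real.log (R + x * Θ R) / (Θ R * Real.log (Θ R)) := by
        field_simp
        ring
      rw [hEq]
      have hup : R + x * Θ R ≤ (1 + C) * Θ R := by nlinarith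
      have hlogup : Real.log (R + x * Θ R) ≤ Real.log (1 + C) + Real.log (Θ R) := by
        calc Real.log (R + x * Θ R) ≤ Real.log ((1 + C) * Θ R) := Real.log_le_log hu0 hup
          _ = Real.log (1 + C) + Real.log (Θ R) := Real.log_mul (by linarith) hΘne
      -- T1 numerator bounds
      have hN1up : x * (Real.log (R + x * Θ R) - Real.log (Θ R)) ≤ C * Real.log (1 + C) := by
        have h1 : Real.log (R + x * Θ R) - Real.log (Θ R) ≤ Real.log (1 + C) := by linarith
        calc x * (Real.log (R + x * Θ R) - Real.log (Θ R)) ≤ x * Real.log (1 + C) :=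
              mul_le_mul_of_nonneg_left h1 hx0
          _ ≤ C * Real.log (1 + C) := mul_le_mul_of_nonneg_right hxC hlog1C
      have hN1low : -1 ≤ x * (Real.log (R + x * Θ R) - Real.log (Θ R)) := by
        rcases eq_or_lt_of_le hx0 with h | hx0'
        · rw [← h]; norm_num
        · have hxΘ : 0 < x * Θ R := by positivity
          have hlogxΘ : Real.log x + Real.log (Θ R) ≤ Real.log (R + x * Θ R) := by
            rw [← Real.log_mul hx0'.ne' hΘne]
            exact Real.log_le_log hxΘ (by linarith)
          have hxlogx : -1 ≤ x * Real.log x := by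
            rcases le_total x 1 with hx1 | hx1
            · have h2 : x * (1 - 1 / x) ≤ x * Real.log x :=
                mul_le_mul_of_nonneg_left (aux_le_log hx0') hx0
              have h3 : x * (1 - 1 / x) = x - 1 := by field_simp
              linarith
            · nlinarith [Real.log_nonneg hx1]
          have h4 : x * Real.log x ≤ x * (Real.log (R + x * Θ R) - Real.log (Θ R)) :=
            mul_le_mul_of_nonneg_left (by linarith) hx0
          linarith
      have hT1up : x * (Real.log (R + x * Θ R) - Real.log (Θ R)) / Real.log (Θ R)
          ≤ C * Real.log (1 + C) * (1 / Real.log (Θ R)) := by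
        rw [mul_one_div]
        gcongr
      have hT1low : -(1 / Real.log (Θ R))
          ≤ x * (Real.log (R + x * Θ R) - Real.log (Θ R)) / Real.log (Θ R) := by
        rw [show -(1 / Real.log (Θ R)) = (-1) / Real.log (Θ R) by ring]
        gcongr
      have hT2 : |x * (Real.log R / Real.log (Θ R) - c)|
          ≤ C * |Real.log R / Real.log (Θ R) - c| := by
        rw [abs_mul, abs_of_nonneg hx0]
        exact mul_le_mul_of_nonneg_right hxC (abs_nonneg _)
      obtain ⟨hT2low, hT2up⟩ := abs_le.1 hT2
      have hlogdiff : Real.log (R + x * Θ R) - Real.log R ≤ x * Θ R / R := by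
        have h1 : Real.log ((R + x * Θ R) / R) ≤ (R + x * Θ R) / R - 1 :=
          Real.log_le_sub_one_of_pos (by positivity)
        rw [Real.log_div hu0.ne' hR0.ne'] at h1
        have h2 : (R + x * Θ R) / R - 1 = x * Θ R / R := by field_simp; ring
        linarith
      have hlogmono : Real.log R ≤ Real.log (R + x * Θ R) := Real.log_le_log hR0 hRu
      have hT3low : 0 ≤ R * (Real.log (R + x * Θ R) - Real.log R) / (Θ R * Real.log (Θ R)) := by
        apply div_nonneg (mul_nonneg hR0.le (by linarith)) (by positivity)
      have hT3up : R * (Real.log (R + x * Θ R) - Real.log R) / (Θ R * Real.log (Θ R))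
          ≤ C * (1 / Real.log (Θ R)) := by
        have h1 : R * (Real.log (R + x * Θ R) - Real.log R) ≤ C * Θ R := by
          calc R * (Real.log (R + x * Θ R) - Real.log R) ≤ R * (x * Θ R / R) :=
                mul_le_mul_of_nonneg_left hlogdiff hR0.le
            _ = x * Θ R := by field_simp
            _ ≤ C * Θ R := mul_le_mul_of_nonneg_right hxC hΘ.le
        calc R * (Real.log (R + x * Θ R) - Real.log R) / (Θ R * Real.log (Θ R))
            ≤ C * Θ R / (Θ R * Real.log (Θ R)) := by gcongr
          _ = C * (1 / Real.log (Θ R)) := by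
              field_simp
      have hT4low : 0 ≤ x / Real.log (Θ R) := div_nonneg hx0 hlΘ0.le
      have hT4up : x / Real.log (Θ R) ≤ C * (1 / Real.log (Θ R)) := by
        rw [mul_one_div]
        gcongr
      have hT5low : 0 ≤ β * Real.log (R + x * Θ R) / (Θ R * Real.log (Θ R)) :=
        div_nonneg (mul_nonneg hβ.le hLu0) (by positivity)
      have hT5up : β * Real.log (R + x * Θ R) / (Θ R * Real.log (Θ R))
          ≤ β * (Real.log (1 + C) + 1) * (1 / Θ R) := by
        have h5a : β * Real.log (R + x * Θ R)
            ≤ β * (Real.log (1 + C) + Real.log (Θ R)) :=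
          mul_le_mul_of_nonneg_left hlogup hβ.le
        have h5b : β * Real.log (R + x * Θ R) / (Θ R * Real.log (Θ R))
            ≤ β * (Real.log (1 + C) + Real.log (Θ R)) / (Θ R * Real.log (Θ R)) := by
          gcongr
        have e1 : β * (Real.log (1 + C) + Real.log (Θ R)) / (Θ R * Real.log (Θ R))
            = β * Real.log (1 + C) / (Θ R * Real.log (Θ R)) + β / Θ R := by
          field_simp
        have e2 : β * Real.log (1 + C) / (Θ R * Real.log (Θ R))
            ≤ β * Real.log (1 + C) / Θ R := by
          apply div_le_div_of_nonneg_left (by positivity) hΘ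
          nlinarith
        have e3 : β * Real.log (1 + C) / Θ R + β / Θ R
            = β * (Real.log (1 + C) + 1) * (1 / Θ R) := by
          field_simp
        linarith
      rw [abs_le]
      constructor
      · nlinarith [mul_nonneg (mul_nonneg hC.le hlog1C) hw.le, mul_nonneg hC.le hw.le]
      · nlinarith [mul_nonneg (mul_nonneg hC.le hlog1C) hw.le, mul_nonneg hC.le hw.le,
          mul_nonneg hw.le hC.le]



end
end

section
/- For all reals s ≤ t: √π · ∫_ℝ Φ₀(x − 2s) · (1 − Φ₀(x − 2t)) dx = e^{−(t−s)²} − 2√π (t − s) · Φ₀(√2 (t − s)). (Exact evaluation of the covariance kernel of the limiting Gaussian process for microscopic counting fluctuations of the Ginibre ensemble; in particular both sides equal 1 when s = t.) -/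
open MeasureTheory Filter Set

noncomputable section

/-- The standard Gaussian tail function `Φ₀`. -/
def gaussTail (x : ℝ) : ℝ :=
  (Real.sqrt (2 * Real.pi))⁻¹ * ∫ t in Set.Ioi x, Real.exp (-t ^ 2 / 2)

open scoped ENNReal NNReal

namespace GA

def gd (u : ℝ) : ℝ := Real.exp (-u ^ 2 / 2)

lemma gd_nonneg (u : ℝ) : 0 ≤ gd u := (Real.exp_pos _).le

lemma gd_eq : gd = fun u : ℝ => Real.exp (-(1/2 : ℝ) * u ^ 2) := by
  funext u; simp only [gd]; ring_nf

lemma gd_integrable : Integrable gd := by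
  rw [gd_eq]; exact integrable_exp_neg_mul_sq (by norm_num)

lemma gd_total : ∫ u : ℝ, gd u = Real.sqrt (2 * Real.pi) := by
  rw [gd_eq, integral_gaussian, show Real.pi / (1/2) = 2 * Real.pi by ring]

lemma gd_meas : Measurable gd := by unfold gd; fun_prop

def nc : ℝ := (Real.sqrt (2 * Real.pi))⁻¹

lemma s2pi_pos : 0 < Real.sqrt (2 * Real.pi) := Real.sqrt_pos.mpr (by positivity)

lemma nc_nonneg : 0 ≤ nc := inv_nonneg.mpr (Real.sqrt_nonneg _)

lemma nc_mul : nc * Real.sqrt (2 * Real.pi) = 1 := inv_mul_cancel₀ s2pi_pos.ne'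

lemma gaussTail_def (x : ℝ) : gaussTail x = nc * ∫ u in Ioi x, gd u := rfl

lemma gaussTail_nonneg (x : ℝ) : 0 ≤ gaussTail x := by
  rw [gaussTail_def]
  exact mul_nonneg nc_nonneg (setIntegral_nonneg measurableSet_Ioi fun u _ => gd_nonneg u)

lemma gaussTail_anti : Antitone gaussTail := by
  intro x y h
  rw [gaussTail_def, gaussTail_def]
  refine mul_le_mul_of_nonneg_left ?_ nc_nonneg
  exact setIntegral_mono_set gd_integrable.integrableOn
    (ae_of_all _ fun u => gd_nonneg u) (HasSubset.Subset.eventuallyLE (Ioi_subset_Ioi h))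

lemma gaussTail_meas : Measurable gaussTail := gaussTail_anti.measurable

lemma one_sub_gaussTail (y : ℝ) : 1 - gaussTail y = nc * ∫ v in Iio y, gd v := by
  have hsplit : (∫ v in Iio y, gd v) + ∫ v in Ici y, gd v = ∫ v, gd v :=
    intervalIntegral.integral_Iio_add_Ici gd_integrable.integrableOn gd_integrable.integrableOn
  rw [integral_Ici_eq_integral_Ioi] at hsplit
  rw [gaussTail_def]
  have h2 : (∫ v in Ioi y, gd v) = Real.sqrt (2 * Real.pi) - ∫ v in Iio y, gd v := by
    rw [← gd_total]; linarith
  rw [h2, mul_sub]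
  rw [nc_mul]; ring

/-! ### lintegral representations -/

def G (u : ℝ) : ℝ≥0∞ := ENNReal.ofReal (gd u)

lemma G_meas : Measurable G := ENNReal.measurable_ofReal.comp gd_meas

lemma G_ne_top (u : ℝ) : G u ≠ ∞ := ENNReal.ofReal_ne_top

lemma G_total : ∫⁻ u, G u = ENNReal.ofReal (Real.sqrt (2 * Real.pi)) := by
  simp only [G]
  rw [← gd_total, ← ofReal_integral_eq_lintegral_ofReal gd_integrable
    (ae_of_all _ fun u => gd_nonneg u)]

lemma ofReal_gaussTail (x : ℝ) :
    ENNReal.ofReal (gaussTail x) = ENNReal.ofReal nc * ∫⁻ u in Ioi x, G u := by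
  simp only [G]
  rw [gaussTail_def, ENNReal.ofReal_mul nc_nonneg,
    ofReal_integral_eq_lintegral_ofReal gd_integrable.integrableOn
      (ae_of_all _ fun u => gd_nonneg u)]

def B (a x : ℝ) : ℝ≥0∞ := ∫⁻ v in Iio (x - 2 * a), G v

lemma ofReal_one_sub_gaussTail (a x : ℝ) :
    ENNReal.ofReal (1 - gaussTail (x - 2 * a)) = ENNReal.ofReal nc * B a x := by
  rw [one_sub_gaussTail, ENNReal.ofReal_mul nc_nonneg,
    ofReal_integral_eq_lintegral_ofReal gd_integrable.integrableOn
      (ae_of_all _ fun u => gd_nonneg u)]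
  rfl

lemma B_mono (a : ℝ) : Monotone (B a) := fun x y h =>
  lintegral_mono_set (Iio_subset_Iio (by linarith))

lemma B_meas (a : ℝ) : Measurable (B a) := (B_mono a).measurable

lemma B_ne_top (a x : ℝ) : B a x ≠ ∞ := by
  refine ne_top_of_le_ne_top ?_ (lintegral_mono' Measure.restrict_le_self le_rfl)
  rw [G_total]; exact ENNReal.ofReal_ne_top

/-! ### Gaussian convolution -/

lemma gd_mul_eq (w u : ℝ) :
    gd u * gd (u - w) = Real.exp (-w ^ 2 / 4) * Real.exp (-(1 : ℝ) * (u - w / 2) ^ 2) := by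
  simp only [gd, ← Real.exp_add]
  congr 1
  ring

lemma gauss_conv_integrable (w : ℝ) : Integrable (fun u => gd u * gd (u - w)) := by
  simp_rw [gd_mul_eq w]
  exact ((integrable_exp_neg_mul_sq one_pos).comp_sub_right (w / 2)).const_mul _

lemma gauss_conv (w : ℝ) :
    ∫ u : ℝ, gd u * gd (u - w) = Real.sqrt Real.pi * Real.exp (-w ^ 2 / 4) := by
  simp_rw [gd_mul_eq w]
  rw [integral_const_mul, integral_sub_right_eq_self (fun u => Real.exp (-(1:ℝ) * u ^ 2)) (w/2),
    integral_gaussian, show Real.pi / 1 = Real.pi by ring, mul_comm]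

lemma gauss_conv_lintegral (w : ℝ) :
    ∫⁻ u, G u * G (u - w) = ENNReal.ofReal (Real.sqrt Real.pi * Real.exp (-w ^ 2 / 4)) := by
  have h : ∀ u : ℝ, G u * G (u - w) = ENNReal.ofReal (gd u * gd (u - w)) := fun u =>
    (ENNReal.ofReal_mul (gd_nonneg u)).symm
  simp_rw [h]
  rw [← ofReal_integral_eq_lintegral_ofReal (gauss_conv_integrable w)
    (ae_of_all _ fun u => mul_nonneg (gd_nonneg u) (gd_nonneg _)), gauss_conv]

/-! ### Tonelli computations -/

lemma N_eq (a u : ℝ) :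
    ∫⁻ x in Iio u, B a x = ∫⁻ w, G (u - w) * ENNReal.ofReal (w - 2 * a) := by
  have step1 : ∫⁻ x in Iio u, B a x
      = ∫⁻ x in Iio u, ∫⁻ v, (Iio (x - 2 * a)).indicator G v := by
    refine lintegral_congr fun x => ?_
    rw [lintegral_indicator measurableSet_Iio]; rfl
  rw [step1, lintegral_lintegral_swap ?hmeas]
  case hmeas =>
    have h : (Function.uncurry fun (x v : ℝ) => (Iio (x - 2 * a)).indicator G v)
        = ({q : ℝ × ℝ | q.2 < q.1 - 2 * a}).indicator (fun q => G q.2) := by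
      funext p
      by_cases h : p.2 < p.1 - 2 * a <;>
        simp [Function.uncurry, Set.indicator_apply, h]
    rw [h]
    exact ((G_meas.comp measurable_snd).indicator
      (measurableSet_lt measurable_snd (measurable_fst.sub measurable_const))).aemeasurable
  have step2 : ∀ v : ℝ, (∫⁻ x in Iio u, (Iio (x - 2 * a)).indicator G v)
      = G v * ENNReal.ofReal (u - (v + 2 * a)) := by
    intro v
    have hpt : ∀ x : ℝ, (Iio (x - 2 * a)).indicator G v
        = (Ioi (v + 2 * a)).indicator (fun _ => G v) x := by
      intro x
      simp only [Set.indicator_apply, mem_Iio, mem_Ioi]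
      exact if_congr ⟨fun h => by linarith, fun h => by linarith⟩ rfl rfl
    simp_rw [hpt]
    rw [lintegral_indicator measurableSet_Ioi, setLIntegral_const,
      Measure.restrict_apply measurableSet_Ioi, Set.Ioi_inter_Iio, Real.volume_Ioo]
  simp_rw [step2]
  have hf : Measurable fun v : ℝ => G v * ENNReal.ofReal (u - (v + 2 * a)) :=
    G_meas.mul (ENNReal.measurable_ofReal.comp ((measurable_id.add_const _).const_sub u))
  rw [← (Measure.measurePreserving_sub_left (volume : Measure ℝ) u).lintegral_comp hf]
  refine lintegral_congr fun w => ?_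
  have h : u - (u - w + 2 * a) = w - 2 * a := by ring
  simp only [Function.comp, h]

lemma M_eq (a : ℝ) :
    ∫⁻ x, (∫⁻ u in Ioi x, G u) * B a x
      = ∫⁻ w, ENNReal.ofReal (Real.sqrt Real.pi * Real.exp (-w ^ 2 / 4))
          * ENNReal.ofReal (w - 2 * a) := by
  have step1 : ∀ x : ℝ, (∫⁻ u in Ioi x, G u) * B a x
      = ∫⁻ u, (Ioi x).indicator G u * B a x := by
    intro x
    calc (∫⁻ u in Ioi x, G u) * B a x
        = (∫⁻ u, (Ioi x).indicator G u) * B a x := by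
          rw [lintegral_indicator measurableSet_Ioi]
      _ = ∫⁻ u, (Ioi x).indicator G u * B a x :=
          (lintegral_mul_const' _ _ (B_ne_top a x)).symm
  simp_rw [step1]
  rw [lintegral_lintegral_swap ?hm1]
  case hm1 =>
    have h : (Function.uncurry fun (x u : ℝ) => (Ioi x).indicator G u * B a x)
        = fun p : ℝ × ℝ =>
            ({q : ℝ × ℝ | q.1 < q.2}).indicator (fun q => G q.2) p * B a p.1 := by
      funext p
      by_cases h : p.1 < p.2 <;>
        simp [Function.uncurry, Set.indicator_apply, h, mem_Ioi]
    rw [h]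
    exact (((G_meas.comp measurable_snd).indicator
      (measurableSet_lt measurable_fst measurable_snd)).mul
      ((B_meas a).comp measurable_fst)).aemeasurable
  have step2 : ∀ u : ℝ, (∫⁻ x, (Ioi x).indicator G u * B a x)
      = G u * ∫⁻ x in Iio u, B a x := by
    intro u
    have hpt : ∀ x : ℝ, (Ioi x).indicator G u * B a x
        = (Iio u).indicator (fun x => G u * B a x) x := by
      intro x
      simp only [Set.indicator_apply, mem_Ioi, mem_Iio]
      by_cases h : x < u <;> simp [h]
    simp_rw [hpt]
    rw [lintegral_indicator measurableSet_Iio, lintegral_const_mul' _ _ (G_ne_top u)]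
  simp_rw [step2, N_eq]
  have step3 : ∀ u : ℝ, G u * (∫⁻ w, G (u - w) * ENNReal.ofReal (w - 2 * a))
      = ∫⁻ w, G u * (G (u - w) * ENNReal.ofReal (w - 2 * a)) :=
    fun u => (lintegral_const_mul' _ _ (G_ne_top u)).symm
  simp_rw [step3]
  rw [lintegral_lintegral_swap ?hm2]
  case hm2 =>
    refine Measurable.aemeasurable ?_
    have : Measurable fun p : ℝ × ℝ =>
        G p.1 * (G (p.1 - p.2) * ENNReal.ofReal (p.2 - 2 * a)) :=
      (G_meas.comp measurable_fst).mul ((G_meas.comp (measurable_fst.sub measurable_snd)).mul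
        (ENNReal.measurable_ofReal.comp (measurable_snd.sub measurable_const)))
    exact this
  refine lintegral_congr fun w => ?_
  calc ∫⁻ u, G u * (G (u - w) * ENNReal.ofReal (w - 2 * a))
      = ∫⁻ u, G u * G (u - w) * ENNReal.ofReal (w - 2 * a) := by simp_rw [mul_assoc]
    _ = (∫⁻ u, G u * G (u - w)) * ENNReal.ofReal (w - 2 * a) :=
        lintegral_mul_const' _ _ ENNReal.ofReal_ne_top
    _ = _ := by rw [gauss_conv_lintegral]

/-! ### back to real integrals -/

lemma exp4_integrable : Integrable fun w : ℝ => Real.exp (-w ^ 2 / 4) := by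
  have h : (fun w : ℝ => Real.exp (-w ^ 2 / 4)) = fun w => Real.exp (-(1/4 : ℝ) * w ^ 2) := by
    funext w; ring_nf
  rw [h]; exact integrable_exp_neg_mul_sq (by norm_num)

lemma mul_exp4_integrable : Integrable fun w : ℝ => w * Real.exp (-w ^ 2 / 4) := by
  have h : (fun w : ℝ => w * Real.exp (-w ^ 2 / 4))
      = fun w => w * Real.exp (-(1/4 : ℝ) * w ^ 2) := by
    funext w; ring_nf
  rw [h]; exact integrable_mul_exp_neg_mul_sq (by norm_num)

lemma lin_exp4_integrable (a : ℝ) :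
    Integrable fun w : ℝ => (w - 2 * a) * Real.exp (-w ^ 2 / 4) := by
  have h : (fun w : ℝ => (w - 2 * a) * Real.exp (-w ^ 2 / 4))
      = fun w => w * Real.exp (-w ^ 2 / 4) - (2 * a) * Real.exp (-w ^ 2 / 4) := by
    funext w; ring
  rw [h]
  exact mul_exp4_integrable.sub (exp4_integrable.const_mul _)

def Kfun (a : ℝ) : ℝ → ℝ :=
  (Ioi (2 * a)).indicator fun w => Real.sqrt Real.pi * ((w - 2 * a) * Real.exp (-w ^ 2 / 4))

lemma Kfun_integrable (a : ℝ) : Integrable (Kfun a) :=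
  (((lin_exp4_integrable a).const_mul (Real.sqrt Real.pi)).indicator measurableSet_Ioi)

lemma Kfun_nonneg (a w : ℝ) : 0 ≤ Kfun a w := by
  unfold Kfun
  by_cases h : w ∈ Ioi (2 * a)
  · rw [Set.indicator_of_mem h]
    have : (0:ℝ) ≤ w - 2 * a := by simp only [mem_Ioi] at h; linarith
    positivity
  · rw [Set.indicator_of_notMem h]

lemma M_real (a : ℝ) :
    (∫⁻ w, ENNReal.ofReal (Real.sqrt Real.pi * Real.exp (-w ^ 2 / 4))
        * ENNReal.ofReal (w - 2 * a))
      = ENNReal.ofReal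
          (Real.sqrt Real.pi * ∫ w in Ioi (2 * a), (w - 2 * a) * Real.exp (-w ^ 2 / 4)) := by
  have hpt : ∀ w : ℝ, ENNReal.ofReal (Real.sqrt Real.pi * Real.exp (-w ^ 2 / 4))
      * ENNReal.ofReal (w - 2 * a) = ENNReal.ofReal (Kfun a w) := by
    intro w
    rw [← ENNReal.ofReal_mul (by positivity)]
    unfold Kfun
    by_cases h : w ∈ Ioi (2 * a)
    · rw [Set.indicator_of_mem h]; ring_nf
    · rw [Set.indicator_of_notMem h]
      simp only [mem_Ioi, not_lt] at h
      rw [ENNReal.ofReal_of_nonpos, ENNReal.ofReal_zero]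
      have h1 : w - 2 * a ≤ 0 := by linarith
      have h2 : (0:ℝ) ≤ Real.sqrt Real.pi * Real.exp (-w ^ 2 / 4) := by positivity
      exact mul_nonpos_of_nonneg_of_nonpos h2 h1
  simp_rw [hpt]
  rw [← ofReal_integral_eq_lintegral_ofReal (Kfun_integrable a)
    (ae_of_all _ fun w => Kfun_nonneg a w)]
  congr 1
  unfold Kfun
  rw [integral_indicator measurableSet_Ioi, ← integral_const_mul]

/-! ### evaluating the one-dimensional integrals -/

lemma K1 (a : ℝ) : ∫ w in Ioi (2 * a), w * Real.exp (-w ^ 2 / 4) = 2 * Real.exp (-a ^ 2) := by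
  have hderiv : ∀ x ∈ Ici (2 * a),
      HasDerivAt (fun w : ℝ => -2 * Real.exp (-w ^ 2 / 4)) (x * Real.exp (-x ^ 2 / 4)) x := by
    intro x _
    have h1 : HasDerivAt (fun w : ℝ => -w ^ 2 / 4) (-(2 * x ^ 1) / 4) x :=
      ((hasDerivAt_pow 2 x).neg).div_const 4
    have h2 := (h1.exp).const_mul (-2 : ℝ)
    refine h2.congr_deriv ?_
    ring
  have htend : Tendsto (fun w : ℝ => -2 * Real.exp (-w ^ 2 / 4)) atTop (nhds 0) := by
    have h1 : Tendsto (fun w : ℝ => -w ^ 2 / 4) atTop atBot := by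
      apply Filter.Tendsto.atBot_div_const (by norm_num : (0:ℝ) < 4)
      exact tendsto_neg_atBot_iff.mpr (tendsto_pow_atTop two_ne_zero)
    have h2 : Tendsto (fun w : ℝ => Real.exp (-w ^ 2 / 4)) atTop (nhds 0) :=
      Real.tendsto_exp_atBot.comp h1
    have := h2.const_mul (-2 : ℝ)
    simpa using this
  have := integral_Ioi_of_hasDerivAt_of_tendsto' hderiv
    (mul_exp4_integrable.integrableOn) htend
  rw [this]
  rw [show -(2 * a) ^ 2 / 4 = -a ^ 2 by ring]
  ring

lemma K2 (a : ℝ) :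
    ∫ w in Ioi (2 * a), Real.exp (-w ^ 2 / 4) = 2 * ∫ y in Ioi a, Real.exp (-y ^ 2) := by
  have h := integral_comp_mul_left_Ioi (fun w => Real.exp (-w ^ 2 / 4)) a
    (by norm_num : (0:ℝ) < 2)
  simp only [smul_eq_mul] at h
  have hg : ∀ x : ℝ, Real.exp (-(2 * x) ^ 2 / 4) = Real.exp (-x ^ 2) := by
    intro x; congr 1; ring
  simp_rw [hg] at h
  rw [h]
  ring

lemma gaussTail_sqrt2 (a : ℝ) :
    gaussTail (Real.sqrt 2 * a) = nc * (Real.sqrt 2 * ∫ y in Ioi a, Real.exp (-y ^ 2)) := by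
  rw [gaussTail_def]
  congr 1
  have h := integral_comp_mul_left_Ioi (fun t => gd t) a
    (Real.sqrt_pos.mpr (by norm_num : (0:ℝ) < 2))
  simp only [smul_eq_mul] at h
  have hg : ∀ x : ℝ, gd (Real.sqrt 2 * x) = Real.exp (-x ^ 2) := by
    intro x
    unfold gd
    congr 1
    have h2 : Real.sqrt 2 ^ 2 = 2 := Real.sq_sqrt (by norm_num)
    rw [mul_pow, h2]
    ring
  simp_rw [hg] at h
  have hs2 : (0:ℝ) < Real.sqrt 2 := Real.sqrt_pos.mpr (by norm_num)
  rw [h]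
  field_simp

/-! ### the key lintegral identity -/

lemma key (a : ℝ) :
    ∫⁻ x : ℝ, ENNReal.ofReal (gaussTail x * (1 - gaussTail (x - 2 * a)))
      = ENNReal.ofReal (nc * nc *
          (Real.sqrt Real.pi * ∫ w in Ioi (2 * a), (w - 2 * a) * Real.exp (-w ^ 2 / 4))) := by
  have hpt : ∀ x : ℝ, ENNReal.ofReal (gaussTail x * (1 - gaussTail (x - 2 * a)))
      = (ENNReal.ofReal nc * ENNReal.ofReal nc)
          * ((∫⁻ u in Ioi x, G u) * B a x) := by
    intro x
    rw [ENNReal.ofReal_mul (gaussTail_nonneg x), ofReal_gaussTail, ofReal_one_sub_gaussTail]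
    ring
  simp_rw [hpt]
  rw [lintegral_const_mul' _ _ (ENNReal.mul_ne_top ENNReal.ofReal_ne_top ENNReal.ofReal_ne_top),
    M_eq, M_real, ← ENNReal.ofReal_mul nc_nonneg,
    ← ENNReal.ofReal_mul (mul_nonneg nc_nonneg nc_nonneg)]

lemma aux_nonneg (a : ℝ) :
    0 ≤ ∫ w in Ioi (2 * a), (w - 2 * a) * Real.exp (-w ^ 2 / 4) := by
  refine setIntegral_nonneg measurableSet_Ioi fun w hw => ?_
  have : (0:ℝ) ≤ w - 2 * a := by rw [mem_Ioi] at hw; linarith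
  positivity

end GA

open GA

set_option linter.unusedVariables false in
/-- Exact evaluation of the covariance kernel of the limiting Gaussian process for
microscopic counting fluctuations of the Ginibre ensemble: for all `s ≤ t`,
`√π ∫_ℝ Φ₀(x−2s)(1−Φ₀(x−2t)) dx = e^{−(t−s)²} − 2√π(t−s)Φ₀(√2(t−s))`. -/
theorem ginibre_covariance_kernel_identity (s t : ℝ) (hst : s ≤ t) :
    Real.sqrt Real.pi * ∫ x : ℝ, gaussTail (x - 2 * s) * (1 - gaussTail (x - 2 * t))
      = Real.exp (-(t - s) ^ 2)
        - 2 * Real.sqrt Real.pi * (t - s) * gaussTail (Real.sqrt 2 * (t - s)) := by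
  set a : ℝ := t - s with ha
  have h0 : (∫ x : ℝ, gaussTail (x - 2 * s) * (1 - gaussTail (x - 2 * t)))
      = ∫ x : ℝ, gaussTail x * (1 - gaussTail (x - 2 * a)) := by
    rw [← integral_sub_right_eq_self (fun y => gaussTail y * (1 - gaussTail (y - 2 * a))) (2 * s)]
    congr 1
    funext x
    have hx : x - 2 * s - 2 * a = x - 2 * t := by rw [ha]; ring
    simp only [hx]
  have hnn : 0 ≤ᵐ[volume] fun x : ℝ => gaussTail x * (1 - gaussTail (x - 2 * a)) := by
    refine ae_of_all _ fun x => mul_nonneg (gaussTail_nonneg x) ?_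
    rw [one_sub_gaussTail]
    exact mul_nonneg nc_nonneg (setIntegral_nonneg measurableSet_Iio fun u _ => gd_nonneg u)
  have hmeas : AEStronglyMeasurable (fun x : ℝ => gaussTail x * (1 - gaussTail (x - 2 * a)))
      volume :=
    (gaussTail_meas.mul (measurable_const.sub
      (gaussTail_meas.comp (measurable_id.sub_const (2 * a))))).aestronglyMeasurable
  have hval : 0 ≤ nc * nc *
      (Real.sqrt Real.pi * ∫ w in Ioi (2 * a), (w - 2 * a) * Real.exp (-w ^ 2 / 4)) :=
    mul_nonneg (mul_nonneg nc_nonneg nc_nonneg)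
      (mul_nonneg (Real.sqrt_nonneg _) (aux_nonneg a))
  rw [h0, integral_eq_lintegral_of_nonneg_ae hnn hmeas, key a, ENNReal.toReal_ofReal hval]
  -- split the remaining real integral
  have hKI : (∫ w in Ioi (2 * a), (w - 2 * a) * Real.exp (-w ^ 2 / 4))
      = 2 * Real.exp (-a ^ 2) - 2 * a * (2 * ∫ y in Ioi a, Real.exp (-y ^ 2)) := by
    have hsplit : ∀ w : ℝ, (w - 2 * a) * Real.exp (-w ^ 2 / 4)
        = w * Real.exp (-w ^ 2 / 4) - 2 * a * Real.exp (-w ^ 2 / 4) := fun w => by ring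
    simp_rw [hsplit]
    rw [integral_sub mul_exp4_integrable.integrableOn
      ((exp4_integrable.const_mul (2 * a)).integrableOn), K1, integral_const_mul, K2]
  rw [hKI, gaussTail_sqrt2]
  set E : ℝ := ∫ y in Ioi a, Real.exp (-y ^ 2) with hE
  have key1 : Real.sqrt Real.pi * Real.sqrt Real.pi = Real.pi :=
    Real.mul_self_sqrt Real.pi_pos.le
  have hq : Real.sqrt (2 * Real.pi) * Real.sqrt (2 * Real.pi) = 2 * Real.pi :=
    Real.mul_self_sqrt (by positivity)
  have h7 : nc * nc = (2 * Real.pi)⁻¹ := by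
    rw [show nc = (Real.sqrt (2 * Real.pi))⁻¹ from rfl, ← mul_inv, hq]
  have key5 : nc * (Real.sqrt 2 * Real.sqrt Real.pi) = 1 := by
    rw [← Real.sqrt_mul (by norm_num : (0:ℝ) ≤ 2) Real.pi]
    exact nc_mul
  have h9 : Real.pi * (2 * Real.pi)⁻¹ = 1 / 2 := by
    field_simp
  have e1 : Real.sqrt Real.pi * (nc * nc *
        (Real.sqrt Real.pi * (2 * Real.exp (-a ^ 2) - 2 * a * (2 * E))))
      = (Real.sqrt Real.pi * Real.sqrt Real.pi) * (nc * nc)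
          * (2 * Real.exp (-a ^ 2) - 4 * a * E) := by ring
  have e2 : Real.exp (-a ^ 2) - 2 * Real.sqrt Real.pi * a * (nc * (Real.sqrt 2 * E))
      = Real.exp (-a ^ 2) - 2 * a * E * (nc * (Real.sqrt 2 * Real.sqrt Real.pi)) := by ring
  rw [e1, e2, key1, h7, h9, key5]
  ring

end
end
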